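/- arXiv:1204.0997 — 15 statements merged into one kernel-verified Lean document; each statement's English description precedes it below -/
import Mathlib

section
/- Let M be a transition matrix on a finite nonempty type σ and let P be a stationary distribution for M. Let V ⊆ σ be a closed set of states, i.e. M i j = 0 whenever j ∈ V and i ∉ V (no edges leave V). Then every state j ∉ V that has an edge into V (i.e. M i j > 0 for some i ∈ V) satisfies P j = 0. -/
/-- Let `M` be a transition matrix on a finite nonempty type `σ` and let
`P` be a stationary distribution for `M`. Let `V ⊆ σ` be a closed set of states
(no edges leave `V`). Then every state `j ∉ V` having an edge into `V` satisfies `P j = 0`. -/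
theorem stationary_boundary_zero
    {σ : Type*} [Fintype σ] [Nonempty σ] [DecidableEq σ]
    (M : Matrix σ σ ℝ)
    (hMoff : ∀ i j : σ, i ≠ j → 0 ≤ M i j)
    (hMcol : ∀ j : σ, ∑ i, M i j = 0)
    (P : σ → ℝ)
    (hPnonneg : ∀ i, 0 ≤ P i) (hPsum : ∑ i, P i = 1)
    (hPstat : M.mulVec P = 0)
    (V : Set σ)
    (hVclosed : ∀ i j : σ, j ∈ V → i ∉ V → M i j = 0)
    (j : σ) (hj : j ∉ V) (hedge : ∃ i ∈ V, 0 < M i j) :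
    P j = 0 := by
  classical
  obtain ⟨i₀, hi₀V, hi₀pos⟩ := hedge
  set T : Finset σ := Finset.univ.filter (· ∈ V) with hT
  have hmemT : ∀ k, k ∈ T ↔ k ∈ V := by
    intro k; simp [hT]
  -- column sums over T
  have hcol_inV : ∀ k, k ∈ V → ∑ i ∈ T, M i k = 0 := by
    intro k hk
    have hsplit := Finset.sum_filter_add_sum_filter_not Finset.univ (· ∈ V) (fun i => M i k)
    have hcompl : ∑ i ∈ Finset.univ.filter (fun i => ¬ i ∈ V), M i k = 0 := by
      apply Finset.sum_eq_zero
      intro i hi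
      exact hVclosed i k hk (Finset.mem_filter.mp hi).2
    have := hMcol k
    rw [← hsplit, hcompl, add_zero] at this
    simpa [hT] using this
  have hcol_nonneg : ∀ k, k ∉ V → 0 ≤ ∑ i ∈ T, M i k := by
    intro k hk
    apply Finset.sum_nonneg
    intro i hi
    have hiV := (hmemT i).mp hi
    exact hMoff i k (fun h => hk (h ▸ hiV))
  -- total sum over T of mulVec is 0
  have htot : ∑ k ∈ Finset.univ.filter (fun k => ¬ k ∈ V), P k * ∑ i ∈ T, M i k = 0 := by
    have h1 : ∑ i ∈ T, (M.mulVec P) i = 0 := by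
      apply Finset.sum_eq_zero
      intro i _
      rw [hPstat]; rfl
    have h2 : ∑ i ∈ T, (M.mulVec P) i = ∑ k, P k * ∑ i ∈ T, M i k := by
      simp only [Matrix.mulVec, dotProduct]
      rw [Finset.sum_comm]
      apply Finset.sum_congr rfl
      intro k _
      rw [Finset.mul_sum]
      apply Finset.sum_congr rfl
      intro i _
      ring
    have hsplit := Finset.sum_filter_add_sum_filter_not Finset.univ (· ∈ V)
      (fun k => P k * ∑ i ∈ T, M i k)
    have hVpart : ∑ k ∈ Finset.univ.filter (· ∈ V), P k * ∑ i ∈ T, M i k = 0 := by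
      apply Finset.sum_eq_zero
      intro k hk
      rw [hcol_inV k (Finset.mem_filter.mp hk).2, mul_zero]
    have := h1
    rw [h2, ← hsplit, hVpart, zero_add] at this
    exact this
  -- each term nonneg, so the j term is zero
  have hterm : P j * ∑ i ∈ T, M i j = 0 := by
    have hnn : ∀ k ∈ Finset.univ.filter (fun k => ¬ k ∈ V),
        0 ≤ P k * ∑ i ∈ T, M i k := by
      intro k hk
      exact mul_nonneg (hPnonneg k) (hcol_nonneg k (Finset.mem_filter.mp hk).2)
    have hjmem : j ∈ Finset.univ.filter (fun k => ¬ k ∈ V) := by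
      simp [hj]
    exact (Finset.sum_eq_zero_iff_of_nonneg hnn).mp htot j hjmem
  have hpos : 0 < ∑ i ∈ T, M i j := by
    have hi₀T : i₀ ∈ T := (hmemT i₀).mpr hi₀V
    have := Finset.single_le_sum (f := fun i => M i j)
      (fun i hi => hMoff i j (fun h => hj (h ▸ (hmemT i).mp hi))) hi₀T
    linarith
  have := mul_eq_zero.mp hterm
  rcases this with h | h
  · exact h
  · exact absurd h (ne_of_gt hpos)
end

section
/- Let M be a transition matrix on a finite nonempty type σ and let P be a stationary distribution for M. If a state i has P i = 0, then every state j with an edge j → i (i.e. j ≠ i and M i j > 0) also has P j = 0. -/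
/-- If a state `i` of a stationary distribution `P` has `P i = 0`, then every
state `j` with an edge `j → i` (i.e. `j ≠ i` and `M i j > 0`) also has `P j = 0`. -/
theorem stationary_zero_propagates_upstream
    {σ : Type*} [Fintype σ] [Nonempty σ] [DecidableEq σ]
    (M : Matrix σ σ ℝ)
    (hMoff : ∀ i j : σ, i ≠ j → 0 ≤ M i j)
    (hMcol : ∀ j : σ, ∑ i, M i j = 0)
    (P : σ → ℝ)
    (hPnonneg : ∀ i, 0 ≤ P i) (hPsum : ∑ i, P i = 1)
    (hPstat : M.mulVec P = 0)
    (i : σ) (hPi : P i = 0)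
    (j : σ) (hji : j ≠ i) (hedge : 0 < M i j) :
    P j = 0 := by
  have hrow : ∑ k, M i k * P k = 0 := congrFun hPstat i
  have hnn : ∀ k ∈ Finset.univ, 0 ≤ M i k * P k := by
    intro k _
    rcases eq_or_ne i k with rfl | h
    · simp [hPi]
    · exact mul_nonneg (hMoff i k h) (hPnonneg k)
  have := (Finset.sum_eq_zero_iff_of_nonneg hnn).mp hrow j (Finset.mem_univ j)
  rcases mul_eq_zero.mp this with h | h
  · exact absurd h hedge.ne'
  · exact h
end

section
/- Let M be a transition matrix on a finite nonempty type σ and let P be a stationary distribution for M. Then the support of P is a union of strongly connected components of the transition graph having no outgoing edges; precisely: for every state i with P i > 0 and every state i' reachable from i in the transition graph, one has P i' > 0 and i is reachable from i'. -/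
/-- The support of a stationary distribution is a union of strongly connected
components of the transition graph having no outgoing edges: for every state `i` with
`P i > 0` and every state `i'` reachable from `i`, one has `P i' > 0` and `i` is reachable
from `i'`.  The edge relation is `Edge j i ↔ j ≠ i ∧ 0 < M i j` and reachability is its
reflexive-transitive closure. -/
theorem stationary_support_union_of_closed_scc
    {σ : Type*} [Fintype σ] [Nonempty σ] [DecidableEq σ]
    (M : Matrix σ σ ℝ)
    (hMoff : ∀ i j : σ, i ≠ j → 0 ≤ M i j)
    (hMcol : ∀ j : σ, ∑ i, M i j = 0)
    (P : σ → ℝ)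
    (hPnonneg : ∀ i, 0 ≤ P i) (hPsum : ∑ i, P i = 1)
    (hPstat : M.mulVec P = 0)
    (i : σ) (hPi : 0 < P i)
    (i' : σ) (hreach : Relation.ReflTransGen (fun a b : σ => a ≠ b ∧ 0 < M b a) i i') :
    0 < P i' ∧ Relation.ReflTransGen (fun a b : σ => a ≠ b ∧ 0 < M b a) i' i := by
  classical
  set R : σ → σ → Prop := fun a b => a ≠ b ∧ 0 < M b a with hRdef
  have h1 : ∀ j : σ, ∑ k, M j k * P k = 0 := by
    intro j
    have := congrFun hPstat j
    simpa [Matrix.mulVec, dotProduct] using this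
  -- Step lemma: the support is closed under edges
  have hstep : ∀ j x : σ, 0 < P j → R j x → 0 < P x := by
    rintro j x hPj ⟨hne, hM⟩
    by_contra h
    have hPx : P x = 0 := le_antisymm (not_lt.mp h) (hPnonneg x)
    have h0 : ∑ k, M x k * P k = 0 := h1 x
    rw [← Finset.add_sum_erase _ _ (Finset.mem_univ x)] at h0
    have h0' : ∑ k ∈ Finset.univ.erase x, M x k * P k = 0 := by
      simpa [hPx] using h0
    have hnn : ∀ k ∈ Finset.univ.erase x, 0 ≤ M x k * P k := by
      intro k hk
      exact mul_nonneg (hMoff x k (Finset.mem_erase.mp hk).1.symm) (hPnonneg k)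
    have hterm : M x j * P j = 0 :=
      (Finset.sum_eq_zero_iff_of_nonneg hnn).mp h0' j
        (Finset.mem_erase.mpr ⟨hne, Finset.mem_univ j⟩)
    exact absurd hterm (ne_of_gt (mul_pos hM hPj))
  -- Part 1: everything reachable from i is in the support
  have hsupp : ∀ x, Relation.ReflTransGen R i x → 0 < P x := by
    intro x hx
    induction hx with
    | refl => exact hPi
    | tail _ hbc ih => exact hstep _ _ ih hbc
  -- The "bad" set: support states that cannot reach back to i
  set B : Finset σ :=
    Finset.univ.filter (fun x => 0 < P x ∧ ¬ Relation.ReflTransGen R x i) with hBdef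
  have hmemB : ∀ x, x ∈ B ↔ 0 < P x ∧ ¬ Relation.ReflTransGen R x i := by
    intro x; simp [hBdef]
  -- B is closed: no edges leave B
  have hclosed : ∀ k ∈ B, ∀ j, j ∉ B → j ≠ k → M j k = 0 := by
    intro k hk j hj hne
    obtain ⟨hPk, hkni⟩ := (hmemB k).mp hk
    by_contra hMjk
    have hMpos : 0 < M j k := lt_of_le_of_ne (hMoff j k hne) (Ne.symm hMjk)
    have hRkj : R k j := ⟨hne.symm, hMpos⟩
    have hPj : 0 < P j := hstep k j hPk hRkj
    have hjni : ¬ Relation.ReflTransGen R j i := fun hr => hkni (hr.head hRkj)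
    exact hj ((hmemB j).mpr ⟨hPj, hjni⟩)
  -- column sums restricted to B vanish for k ∈ B
  have hcolB : ∀ k ∈ B, ∑ j ∈ B, M j k = 0 := by
    intro k hk
    have : ∑ j ∈ B, M j k = ∑ j, M j k := by
      apply Finset.sum_subset (Finset.subset_univ B)
      intro j _ hj
      exact hclosed k hk j hj (fun h => hj (h ▸ hk))
    rw [this, hMcol]
  -- total flow into B is zero
  have h2 : ∑ k, (∑ j ∈ B, M j k) * P k = 0 := by
    have : ∑ j ∈ B, ∑ k, M j k * P k = 0 :=
      Finset.sum_eq_zero (fun j _ => h1 j)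
    rw [Finset.sum_comm] at this
    simpa [Finset.sum_mul] using this
  have hf0 : ∀ k, k ∉ B → (∑ j ∈ B, M j k) * P k = 0 := by
    have hnn : ∀ k ∈ Finset.univ, 0 ≤ (∑ j ∈ B, M j k) * P k := by
      intro k _
      by_cases hk : k ∈ B
      · rw [hcolB k hk]; simp
      · refine mul_nonneg (Finset.sum_nonneg ?_) (hPnonneg k)
        intro j hj
        exact hMoff j k (fun h => hk (h ▸ hj))
    intro k _
    exact (Finset.sum_eq_zero_iff_of_nonneg hnn).mp h2 k (Finset.mem_univ k)
  -- no state reachable from i lies in B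
  have hnotB : ∀ x, Relation.ReflTransGen R i x → x ∉ B := by
    intro x hx
    induction hx with
    | refl =>
      intro hiB
      exact ((hmemB i).mp hiB).2 Relation.ReflTransGen.refl
    | @tail b c hab hbc ih =>
      intro hcB
      have hPb : 0 < P b := hsupp b hab
      have hle : M c b ≤ ∑ j ∈ B, M j b := by
        apply Finset.single_le_sum (f := fun j => M j b) _ hcB
        intro j hj
        exact hMoff j b (fun h => ih (h ▸ hj))
      have hpos : 0 < (∑ j ∈ B, M j b) * P b :=
        mul_pos (lt_of_lt_of_le hbc.2 hle) hPb
      exact absurd (hf0 b ih) (ne_of_gt hpos)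
  refine ⟨hsupp i' hreach, ?_⟩
  by_contra h
  exact hnotB i' hreach ((hmemB i').mpr ⟨hsupp i' hreach, h⟩)
end

section
/- Let M be a transition matrix on a finite nonempty type σ and let P and Q be two stationary distributions for M with the same support Φ = {i : P i > 0} = {i : Q i > 0}. If Φ is closed (M i j = 0 whenever j ∈ Φ and i ∉ Φ) and strongly connected (any two states of Φ are mutually reachable in the transition graph), then P = Q. -/
/-- Two stationary distributions for the same transition matrix `M` with the
same support `Φ`, where `Φ` is closed and strongly connected in the transition graph,
are identical. -/
theorem stationary_unique_on_closed_scc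
    {σ : Type*} [Fintype σ] [Nonempty σ] [DecidableEq σ]
    (M : Matrix σ σ ℝ)
    (hMoff : ∀ i j : σ, i ≠ j → 0 ≤ M i j)
    (hMcol : ∀ j : σ, ∑ i, M i j = 0)
    (P Q : σ → ℝ)
    (hPnonneg : ∀ i, 0 ≤ P i) (hPsum : ∑ i, P i = 1) (hPstat : M.mulVec P = 0)
    (hQnonneg : ∀ i, 0 ≤ Q i) (hQsum : ∑ i, Q i = 1) (hQstat : M.mulVec Q = 0)
    (Φ : Set σ)
    (hPsupp : {i : σ | 0 < P i} = Φ)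
    (hQsupp : {i : σ | 0 < Q i} = Φ)
    (hΦclosed : ∀ i j : σ, j ∈ Φ → i ∉ Φ → M i j = 0)
    (hΦscc : ∀ i ∈ Φ, ∀ j ∈ Φ,
      Relation.ReflTransGen (fun a b : σ => a ≠ b ∧ 0 < M b a) i j) :
    P = Q := by
  classical
  -- basic facts about supports
  have hPzero : ∀ i, i ∉ Φ → P i = 0 := by
    intro i hi
    have : ¬ 0 < P i := fun h => hi (hPsupp ▸ (Set.mem_setOf_eq ▸ h))
    linarith [hPnonneg i]
  have hQzero : ∀ i, i ∉ Φ → Q i = 0 := by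
    intro i hi
    have : ¬ 0 < Q i := fun h => hi (hQsupp ▸ (Set.mem_setOf_eq ▸ h))
    linarith [hQnonneg i]
  have hQpos : ∀ i, i ∈ Φ → 0 < Q i := by
    intro i hi
    have : i ∈ {i : σ | 0 < Q i} := hQsupp ▸ hi
    exact this
  have hPpos : ∀ i, i ∈ Φ → 0 < P i := by
    intro i hi
    have : i ∈ {i : σ | 0 < P i} := hPsupp ▸ hi
    exact this
  -- Φ is nonempty
  have hΦne : ∃ i, i ∈ Φ := by
    by_contra h
    push_neg at h
    have : ∑ i, P i = 0 := Finset.sum_eq_zero (fun i _ => hPzero i (h i))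
    rw [hPsum] at this
    norm_num at this
  -- pick the minimizer of P i / Q i over Φ
  have hsne : (Finset.univ.filter (fun i => i ∈ Φ)).Nonempty := by
    obtain ⟨i, hi⟩ := hΦne
    exact ⟨i, by simp [hi]⟩
  obtain ⟨i0, hi0mem, hi0min⟩ :=
    Finset.exists_min_image (Finset.univ.filter (fun i => i ∈ Φ)) (fun i => P i / Q i) hsne
  have hi0Φ : i0 ∈ Φ := (Finset.mem_filter.mp hi0mem).2
  set c : ℝ := P i0 / Q i0 with hc
  set R : σ → ℝ := P - c • Q with hR
  have hRdef : ∀ i, R i = P i - c * Q i := fun i => rfl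
  have hRnonneg : ∀ i, 0 ≤ R i := by
    intro i
    by_cases hi : i ∈ Φ
    · have hq := hQpos i hi
      have : c ≤ P i / Q i := hi0min i (by simp [hi])
      rw [hRdef]
      have := (le_div_iff₀ hq).mp this
      linarith
    · rw [hRdef, hPzero i hi, hQzero i hi]; simp
  have hRstat : M.mulVec R = 0 := by
    rw [hR, Matrix.mulVec_sub, Matrix.mulVec_smul, hPstat, hQstat]
    simp
  -- zeros of R propagate backward along edges
  have key : ∀ a b : σ, R b = 0 → a ≠ b → 0 < M b a → R a = 0 := by
    intro a b hRb hab hMba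
    have h0 : ∑ j, M b j * R j = 0 := by
      have := congrFun hRstat b
      simpa [Matrix.mulVec, dotProduct] using this
    have h1 : ∑ j ∈ Finset.univ.erase b, M b j * R j = 0 := by
      rw [← Finset.sum_erase_add _ _ (Finset.mem_univ b)] at h0
      rw [hRb] at h0
      simpa using h0
    have h2 : ∀ j ∈ Finset.univ.erase b, 0 ≤ M b j * R j := by
      intro j hj
      exact mul_nonneg (hMoff b j (Finset.ne_of_mem_erase hj).symm) (hRnonneg j)
    have h3 := (Finset.sum_eq_zero_iff_of_nonneg h2).mp h1 a
      (Finset.mem_erase.mpr ⟨hab, Finset.mem_univ a⟩)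
    have := mul_eq_zero.mp h3
    rcases this with h | h
    · exact absurd h (ne_of_gt hMba)
    · exact h
  have propagate : ∀ i j : σ,
      Relation.ReflTransGen (fun a b : σ => a ≠ b ∧ 0 < M b a) i j → R j = 0 → R i = 0 := by
    intro i j hij hRj
    induction hij using Relation.ReflTransGen.head_induction_on with
    | refl => exact hRj
    | head hab _ ih => exact key _ _ ih hab.1 hab.2
  -- R i0 = 0
  have hRi0 : R i0 = 0 := by
    rw [hRdef, hc]
    field_simp [ne_of_gt (hQpos i0 hi0Φ)]
    ring
  -- R = 0 everywhere
  have hRzero : ∀ i, R i = 0 := by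
    intro i
    by_cases hi : i ∈ Φ
    · exact propagate i i0 (hΦscc i hi i0 hi0Φ) hRi0
    · rw [hRdef, hPzero i hi, hQzero i hi]; simp
  -- sum gives c = 1
  have hsum : ∑ i, R i = 0 := Finset.sum_eq_zero (fun i _ => hRzero i)
  have : ∑ i, (P i - c * Q i) = 0 := by simpa [hRdef] using hsum
  have hc1 : c = 1 := by
    rw [Finset.sum_sub_distrib, ← Finset.mul_sum, hPsum, hQsum] at this
    linarith
  funext i
  have := hRzero i
  rw [hRdef, hc1] at this
  linarith
end

section
/- Every transition matrix M on a finite nonempty type σ admits a stationary distribution, i.e. there exists a probability vector P with M.mulVec P = 0. -/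
open Filter Topology

/-- Every transition matrix on a finite nonempty type admits a stationary
distribution. -/
theorem exists_stationary_distribution
    {σ : Type*} [Fintype σ] [Nonempty σ] [DecidableEq σ]
    (M : Matrix σ σ ℝ)
    (hMoff : ∀ i j : σ, i ≠ j → 0 ≤ M i j)
    (hMcol : ∀ j : σ, ∑ i, M i j = 0) :
    ∃ P : σ → ℝ, (∀ i, 0 ≤ P i) ∧ (∑ i, P i = 1) ∧ M.mulVec P = 0 := by
  classical
  set T : ℝ := ∑ i, |M i i| with hT
  have hT0 : 0 ≤ T := Finset.sum_nonneg fun i _ => abs_nonneg _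
  set c : ℝ := (1 + T)⁻¹ with hc
  have hc0 : 0 < c := inv_pos.2 (by linarith)
  have hcT : c * (1 + T) = 1 := inv_mul_cancel₀ (by linarith)
  set A : Matrix σ σ ℝ := 1 + c • M with hA
  have hAentry : ∀ i j, A i j = (if i = j then (1:ℝ) else 0) + c * M i j := by
    intro i j
    simp [hA, Matrix.add_apply, Matrix.one_apply, Matrix.smul_apply, smul_eq_mul]
  have hA0 : ∀ i j, 0 ≤ A i j := by
    intro i j
    rcases eq_or_ne i j with rfl | hne
    · have he := hAentry i i
      rw [if_pos rfl] at he
      rw [he]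
      have h1 : |M i i| ≤ T := Finset.single_le_sum (fun j _ => abs_nonneg (M j j)) (Finset.mem_univ i)
      have h2 : -|M i i| ≤ M i i := neg_abs_le _
      nlinarith
    · rw [hAentry]
      simp only [if_neg hne, zero_add]
      exact mul_nonneg hc0.le (hMoff i j hne)
  have hA1 : ∀ j, ∑ i, A i j = 1 := by
    intro j
    simp only [hAentry]
    rw [Finset.sum_add_distrib, ← Finset.mul_sum, hMcol, Finset.sum_ite_eq' Finset.univ j]
    simp
  -- simplex
  set S : Set (σ → ℝ) := {P | (∀ i, 0 ≤ P i) ∧ ∑ i, P i = 1} with hS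
  have hle1 : ∀ P ∈ S, ∀ i, P i ≤ 1 := by
    rintro P ⟨h0, h1⟩ i
    calc P i ≤ ∑ j, P j := Finset.single_le_sum (fun j _ => h0 j) (Finset.mem_univ i)
    _ = 1 := h1
  have hAS : ∀ P ∈ S, A.mulVec P ∈ S := by
    rintro P ⟨h0, h1⟩
    constructor
    · intro i
      exact Finset.sum_nonneg fun j _ => mul_nonneg (hA0 i j) (h0 j)
    · calc ∑ i, (A.mulVec P) i = ∑ i, ∑ j, A i j * P j := rfl
      _ = ∑ j, (∑ i, A i j) * P j := by
          rw [Finset.sum_comm]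
          simp [Finset.sum_mul]
      _ = ∑ j, P j := by simp [hA1]
      _ = 1 := h1
  -- uniform vector
  set v : σ → ℝ := fun _ => (Fintype.card σ : ℝ)⁻¹ with hv
  have hcard : (0:ℝ) < (Fintype.card σ : ℝ) := by
    exact_mod_cast Fintype.card_pos
  have hvS : v ∈ S := by
    constructor
    · intro i; positivity
    · simp [hv, Finset.sum_const, mul_inv_cancel₀ hcard.ne']
  -- iterates
  set w : ℕ → σ → ℝ := fun n => (A ^ n).mulVec v with hw
  have hwsucc : ∀ n, w (n + 1) = A.mulVec (w n) := by
    intro n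
    simp [hw, pow_succ', Matrix.mulVec_mulVec]
  have hwS : ∀ n, w n ∈ S := by
    intro n
    induction n with
    | zero => simpa [hw, Matrix.one_mulVec] using hvS
    | succ n ih => rw [hwsucc]; exact hAS _ ih
  -- Cesàro averages
  set Q : ℕ → σ → ℝ := fun n => ((n : ℝ))⁻¹ • ∑ k ∈ Finset.range n, w k with hQ
  have hQS : ∀ n : ℕ, 0 < n → Q n ∈ S := by
    intro n hn
    have hn0 : (0:ℝ) < (n:ℝ) := by exact_mod_cast hn
    constructor
    · intro i
      simp only [hQ, Pi.smul_apply, smul_eq_mul, Finset.sum_apply]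
      exact mul_nonneg (inv_nonneg.2 hn0.le)
        (Finset.sum_nonneg fun k _ => (hwS k).1 i)
    · simp only [hQ, Pi.smul_apply, smul_eq_mul, Finset.sum_apply]
      rw [← Finset.mul_sum, Finset.sum_comm]
      have : ∀ k ∈ Finset.range n, ∑ i, w k i = 1 := fun k _ => (hwS k).2
      rw [Finset.sum_congr rfl this]
      simp [inv_mul_cancel₀ hn0.ne']
  -- key identity
  have hkey : ∀ n : ℕ, A.mulVec (Q n) - Q n = ((n:ℝ))⁻¹ • (w n - w 0) := by
    intro n
    have h1 : A.mulVec (Q n) = ((n:ℝ))⁻¹ • ∑ k ∈ Finset.range n, w (k + 1) := by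
      simp only [hQ, Matrix.mulVec_smul]
      congr 1
      rw [show A.mulVec (∑ k ∈ Finset.range n, w k)
          = ∑ k ∈ Finset.range n, A.mulVec (w k) by
        simp only [← Matrix.mulVecLin_apply]; exact map_sum _ _ _]
      exact Finset.sum_congr rfl fun k _ => (hwsucc k).symm
    rw [h1, hQ]
    rw [← smul_sub]
    congr 1
    rw [← Finset.sum_sub_distrib]
    exact Finset.sum_range_sub w n
  -- bound on w
  have hwbd : ∀ n, ‖w n‖ ≤ 1 := by
    intro n
    rw [pi_norm_le_iff_of_nonneg zero_le_one]
    intro i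
    rw [Real.norm_eq_abs, abs_le]
    exact ⟨by linarith [(hwS n).1 i], hle1 _ (hwS n) i⟩
  -- compactness of S
  have hScompact : IsCompact S := by
    have hsub : S ⊆ Set.pi Set.univ (fun _ : σ => Set.Icc (0:ℝ) 1) := by
      intro P hP i _
      exact ⟨hP.1 i, hle1 P hP i⟩
    have hK : IsCompact (Set.pi Set.univ (fun _ : σ => Set.Icc (0:ℝ) 1)) :=
      isCompact_univ_pi fun _ => isCompact_Icc
    refine hK.of_isClosed_subset ?_ hsub
    have h1 : IsClosed {P : σ → ℝ | ∀ i, 0 ≤ P i} := by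
      have : {P : σ → ℝ | ∀ i, 0 ≤ P i} = ⋂ i, {P : σ → ℝ | 0 ≤ P i} := by
        ext P; simp
      rw [this]
      exact isClosed_iInter fun i => isClosed_le continuous_const (continuous_apply i)
    have h2 : IsClosed {P : σ → ℝ | ∑ i, P i = 1} :=
      isClosed_eq (continuous_finset_sum _ fun i _ => continuous_apply i) continuous_const
    have : S = {P : σ → ℝ | ∀ i, 0 ≤ P i} ∩ {P : σ → ℝ | ∑ i, P i = 1} := by
      ext P; simp [hS, Set.mem_setOf_eq, Set.mem_inter_iff]
    rw [this]
    exact h1.inter h2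
  -- extract convergent subsequence of Q (n+1)
  obtain ⟨P, hPS, φ, hφ, htend⟩ :=
    hScompact.tendsto_subseq (fun n : ℕ => hQS (n + 1) n.succ_pos)
  refine ⟨P, hPS.1, hPS.2, ?_⟩
  -- continuity
  have hcont : Continuous fun x : σ → ℝ => A.mulVec x - x := by
    have h1 : Continuous fun x : σ → ℝ => A.mulVec x := by
      have := (Matrix.mulVecLin A).continuous_of_finiteDimensional
      exact this
    exact h1.sub continuous_id
  have htend1 : Tendsto (fun n => A.mulVec (Q (φ n + 1)) - Q (φ n + 1)) atTop
      (𝓝 (A.mulVec P - P)) := (hcont.tendsto P).comp htend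
  have htend0 : Tendsto (fun n => A.mulVec (Q (φ n + 1)) - Q (φ n + 1)) atTop (𝓝 0) := by
    apply squeeze_zero_norm (a := fun n : ℕ => 2 * (1 / ((n:ℝ) + 1)))
    · intro n
      rw [hkey]
      have hb : ‖w (φ n + 1) - w 0‖ ≤ 2 := by
        calc ‖w (φ n + 1) - w 0‖ ≤ ‖w (φ n + 1)‖ + ‖w 0‖ := norm_sub_le _ _
        _ ≤ 2 := by linarith [hwbd (φ n + 1), hwbd 0]
      have hn : (n:ℝ) + 1 ≤ (φ n : ℝ) + 1 := by
        have := hφ.le_apply (x := n)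
        exact_mod_cast by linarith [show (n:ℝ) ≤ (φ n : ℝ) from by exact_mod_cast this]
      rw [norm_smul]
      have hpos : (0:ℝ) < (n:ℝ) + 1 := by positivity
      have hpos' : (0:ℝ) < (φ n : ℝ) + 1 := by positivity
      calc ‖((φ n + 1 : ℕ) : ℝ)⁻¹‖ * ‖w (φ n + 1) - w 0‖
          ≤ ((φ n : ℝ) + 1)⁻¹ * 2 := by
            apply mul_le_mul _ hb (norm_nonneg _) (by positivity)
            rw [Real.norm_eq_abs]
            push_cast
            rw [abs_of_nonneg (by positivity)]
        _ ≤ ((n:ℝ) + 1)⁻¹ * 2 := by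
            apply mul_le_mul_of_nonneg_right _ (by norm_num)
            exact inv_anti₀ hpos hn
        _ = 2 * (1 / ((n:ℝ) + 1)) := by ring
    · have := tendsto_one_div_add_atTop_nhds_zero_nat (𝕜 := ℝ)
      have h2 := this.const_mul (2:ℝ)
      simpa using h2
  have hfix : A.mulVec P - P = 0 := tendsto_nhds_unique htend1 htend0
  -- conclude
  have hMP : c • M.mulVec P = 0 := by
    have : A.mulVec P = P + c • M.mulVec P := by
      rw [hA, Matrix.add_mulVec, Matrix.one_mulVec, Matrix.smul_mulVec]
    rw [this] at hfix
    have : c • M.mulVec P = P + c • M.mulVec P - P := by abel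
    rw [this, hfix]
  rcases smul_eq_zero.1 hMP with h | h
  · exact absurd h hc0.ne'
  · exact h
end

section
/- Let M be an irreducible transition matrix on a finite nonempty type σ. Then there exists a stationary distribution P* for M such that for every probability vector P₀, the time averages (1/T) ∫_0^T (Matrix.exp ℝ (t • M)).mulVec P₀ dt converge to P* as T → ∞. -/
open Filter Topology

attribute [local instance] Matrix.linftyOpNormedRing Matrix.linftyOpNormedAlgebra

namespace TimeAvgAux

open NormedSpace Matrix

variable {σ : Type*} [Fintype σ] [DecidableEq σ]

lemma summable_entry (A : Matrix σ σ ℝ) (i j : σ) :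
    Summable fun n : ℕ => (n.factorial : ℝ)⁻¹ * (A ^ n) i j := by
  have hs : Summable fun n : ℕ => (n.factorial : ℝ)⁻¹ • A ^ n := expSeries_summable' (𝕂 := ℝ) A
  have h1 : Summable fun n : ℕ => ((n.factorial : ℝ)⁻¹ • A ^ n) i :=
    hs.map (Pi.evalAddMonoidHom _ i) (continuous_apply i)
  have h2 : Summable fun n : ℕ => ((n.factorial : ℝ)⁻¹ • A ^ n) i j :=
    h1.map (Pi.evalAddMonoidHom _ j) (continuous_apply j)
  simpa [Matrix.smul_apply, smul_eq_mul] using h2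

lemma exp_entry (A : Matrix σ σ ℝ) (i j : σ) :
    exp A i j = ∑' (n : ℕ), ((n.factorial : ℝ)⁻¹ * (A ^ n) i j) := by
  have hs : Summable fun n : ℕ => (n.factorial : ℝ)⁻¹ • A ^ n := expSeries_summable' (𝕂 := ℝ) A
  have h1 : Summable fun n : ℕ => ((n.factorial : ℝ)⁻¹ • A ^ n) i :=
    hs.map (Pi.evalAddMonoidHom _ i) (continuous_apply i)
  simp only [exp_eq_tsum ℝ]
  exact ((congrFun (tsum_apply hs (x := i)) j).trans (tsum_apply h1 (x := j))).trans rfl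

lemma pow_entry_nonneg {A : Matrix σ σ ℝ} (hA : ∀ i j, 0 ≤ A i j) :
    ∀ (n : ℕ) (i j : σ), 0 ≤ (A ^ n) i j := by
  intro n
  induction n with
  | zero => intro i j; simp [Matrix.one_apply]; split <;> norm_num
  | succ n ih =>
    intro i j
    rw [pow_succ, Matrix.mul_apply]
    exact Finset.sum_nonneg fun k _ => mul_nonneg (ih i k) (hA k j)

lemma exp_entry_nonneg {A : Matrix σ σ ℝ} (hA : ∀ i j, 0 ≤ A i j) (i j : σ) :
    0 ≤ exp A i j := by
  rw [exp_entry]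
  exact tsum_nonneg fun n => mul_nonneg (by positivity) (pow_entry_nonneg hA n i j)

lemma exp_smul_one (r : ℝ) : exp (r • (1 : Matrix σ σ ℝ)) = Real.exp r • 1 := by
  rw [Matrix.smul_one_eq_diagonal, Matrix.exp_diagonal]
  have : exp (fun _ : σ => r) = fun _ : σ => Real.exp r := by
    funext i
    rw [Pi.coe_exp, Real.exp_eq_exp_ℝ]
  rw [this, ← Matrix.smul_one_eq_diagonal]

/-- entries of `exp (t • M)` are nonnegative for `t ≥ 0` when `M` has nonneg off-diagonal. -/
lemma exp_smul_entry_nonneg {M : Matrix σ σ ℝ}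
    (hMoff : ∀ i j : σ, i ≠ j → 0 ≤ M i j) {t : ℝ} (ht : 0 ≤ t) (i j : σ) :
    0 ≤ exp (t • M) i j := by
  set c : ℝ := ∑ k, |M k k| with hc
  have hcn : ∀ k, -M k k ≤ c := by
    intro k
    have h1 : |M k k| ≤ c := by
      rw [hc]
      exact Finset.single_le_sum (f := fun k => |M k k|) (fun k _ => abs_nonneg _)
        (Finset.mem_univ k)
    have := neg_abs_le (M k k)
    linarith
  set N : Matrix σ σ ℝ := M + c • 1 with hN
  have hN0 : ∀ i j, 0 ≤ N i j := by
    intro i j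
    by_cases hij : i = j
    · subst hij
      simp only [hN, Matrix.add_apply, Matrix.smul_apply, Matrix.one_apply_eq, smul_eq_mul,
        mul_one]
      linarith [hcn i]
    · simp only [hN, Matrix.add_apply, Matrix.smul_apply, Matrix.one_apply_ne hij, smul_eq_mul,
        mul_zero, add_zero]
      exact hMoff i j hij
  have htN : ∀ i j, 0 ≤ (t • N) i j := by
    intro i j
    simp only [Matrix.smul_apply, smul_eq_mul]
    exact mul_nonneg ht (hN0 i j)
  have hsplit : t • M = t • N + (-(t * c)) • (1 : Matrix σ σ ℝ) := by
    rw [hN]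
    ext i j
    simp only [Matrix.smul_apply, Matrix.add_apply, Matrix.one_apply, smul_eq_mul]
    split <;> ring
  rw [hsplit, Matrix.exp_add_of_commute (t • N) (-(t * c) • 1)
    ((Commute.one_right (t • N)).smul_right _),
    exp_smul_one, mul_smul_comm, mul_one, Matrix.smul_apply, smul_eq_mul]
  exact mul_nonneg (Real.exp_pos _).le (exp_entry_nonneg htN i j)

lemma exp_colsum {B : Matrix σ σ ℝ} (hB : ∀ j, ∑ i, B i j = 0) (j : σ) :
    ∑ i, exp B i j = 1 := by
  have hpow : ∀ (m : ℕ) (j : σ), ∑ i, (B ^ (m + 1)) i j = 0 := by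
    intro m j
    have h : B ^ (m + 1) = B * B ^ m := by rw [pow_succ']
    rw [h]
    simp only [Matrix.mul_apply]
    rw [Finset.sum_comm]
    have h2 : ∀ k, ∑ i, B i k * (B ^ m) k j = 0 := by
      intro k
      rw [← Finset.sum_mul, hB k, zero_mul]
    simp [h2]
  calc ∑ i, exp B i j
      = ∑ i, ∑' (n : ℕ), ((n.factorial : ℝ)⁻¹ * (B ^ n) i j) :=
        Finset.sum_congr rfl fun i _ => exp_entry B i j
    _ = ∑' (n : ℕ), ∑ i, ((n.factorial : ℝ)⁻¹ * (B ^ n) i j) :=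
        (Summable.tsum_finsetSum fun i _ => summable_entry B i j).symm
    _ = ∑' (n : ℕ), (if n = 0 then (1 : ℝ) else 0) := by
        refine tsum_congr fun n => ?_
        cases n with
        | zero => simp [Matrix.one_apply]
        | succ m =>
          rw [← Finset.mul_sum, hpow m j, mul_zero]
          simp
    _ = 1 := by exact tsum_ite_eq (0 : ℕ) (fun _ => (1 : ℝ))

lemma kernel_sign (M : Matrix σ σ ℝ)
    (hMoff : ∀ i j : σ, i ≠ j → 0 ≤ M i j)
    (hMcol : ∀ j : σ, ∑ i, M i j = 0)
    (hirr : ∀ i j : σ, Relation.ReflTransGen (fun a b : σ => a ≠ b ∧ 0 < M b a) i j)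
    (v : σ → ℝ) (hv : M.mulVec v = 0) :
    (∀ i, 0 ≤ v i) ∨ (∀ i, v i ≤ 0) := by
  set c : ℝ := 1 + ∑ k, |M k k| with hc
  have hsum_nn : (0:ℝ) ≤ ∑ k, |M k k| := Finset.sum_nonneg fun k _ => abs_nonneg _
  have hcpos : 0 < c := by rw [hc]; linarith
  set ε : ℝ := c⁻¹ with hε
  have hεpos : 0 < ε := inv_pos.mpr hcpos
  have hεc : ε * c = 1 := inv_mul_cancel₀ hcpos.ne'
  set A : Matrix σ σ ℝ := 1 + ε • M with hA
  have hAapp : ∀ i j, A i j = (if i = j then (1:ℝ) else 0) + ε * M i j := by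
    intro i j
    simp [hA, Matrix.add_apply, Matrix.one_apply, Matrix.smul_apply, smul_eq_mul]
  have hA0 : ∀ i j, 0 ≤ A i j := by
    intro i j
    rw [hAapp]
    by_cases hij : i = j
    · subst hij
      rw [if_pos rfl]
      have h1 : -M i i ≤ c := by
        have h2 : |M i i| ≤ ∑ k, |M k k| :=
          Finset.single_le_sum (f := fun k => |M k k|) (fun k _ => abs_nonneg _)
            (Finset.mem_univ i)
        have := neg_abs_le (M i i)
        rw [hc]; linarith
      nlinarith
    · rw [if_neg hij]
      have := hMoff i j hij
      nlinarith
  have hAcol : ∀ j, ∑ i, A i j = 1 := by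
    intro j
    simp only [hAapp]
    rw [Finset.sum_add_distrib, ← Finset.mul_sum, hMcol j, mul_zero, add_zero]
    simp
  have hAv : A.mulVec v = v := by
    rw [hA, Matrix.add_mulVec, Matrix.one_mulVec, Matrix.smul_mulVec, hv, smul_zero,
      add_zero]
  set a : σ → ℝ := fun i => |v i| with ha
  have hge : ∀ i, a i ≤ A.mulVec a i := by
    intro i
    have h1 : A.mulVec v i = v i := congrFun hAv i
    have h2 : a i = |A.mulVec v i| := by rw [h1]
    rw [h2]
    simp only [Matrix.mulVec, dotProduct]
    calc |∑ j, A i j * v j| ≤ ∑ j, |A i j * v j| := Finset.abs_sum_le_sum_abs _ _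
      _ = ∑ j, A i j * |v j| := Finset.sum_congr rfl fun j _ => by
            rw [abs_mul, abs_of_nonneg (hA0 i j)]
  have hsum : ∑ i, A.mulVec a i = ∑ i, a i := by
    simp only [Matrix.mulVec, dotProduct]
    rw [Finset.sum_comm]
    refine Finset.sum_congr rfl fun j _ => ?_
    rw [← Finset.sum_mul, hAcol j, one_mul]
  have hAa : ∀ i, A.mulVec a i = a i := by
    have hz : ∑ i, (A.mulVec a i - a i) = 0 := by
      rw [Finset.sum_sub_distrib, hsum, sub_self]
    have h := (Finset.sum_eq_zero_iff_of_nonneg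
      (fun i _ => sub_nonneg.mpr (hge i))).mp hz
    intro i
    have h2 := h i (Finset.mem_univ i)
    linarith [h2]
  set p : σ → ℝ := fun i => (a i + v i) / 2 with hp
  have hp0 : ∀ i, 0 ≤ p i := by
    intro i
    have := neg_abs_le (v i)
    simp only [hp, ha]
    linarith
  have hAp : ∀ i, A.mulVec p i = p i := by
    intro i
    simp only [Matrix.mulVec, dotProduct] at hAa ⊢
    have h1 : A.mulVec v i = v i := congrFun hAv i
    simp only [Matrix.mulVec, dotProduct] at h1
    simp only [hp]
    rw [show (∑ j, A i j * ((a j + v j) / 2))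
        = ((∑ j, A i j * a j) + ∑ j, A i j * v j) / 2 by
      rw [← Finset.sum_add_distrib, Finset.sum_div]
      exact Finset.sum_congr rfl fun j _ => by ring]
    rw [hAa i, h1]
  by_cases hpz : ∀ i, p i = 0
  · right
    intro i
    have h := hpz i
    simp only [hp, ha] at h
    have habs : |v i| + v i = 0 := by linarith
    have := le_abs_self (v i)
    linarith
  · left
    push_neg at hpz
    obtain ⟨j, hj⟩ := hpz
    have hpj : 0 < p j := lt_of_le_of_ne (hp0 j) (Ne.symm hj)
    have hprop : ∀ i, 0 < p i := by
      intro i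
      have h := hirr j i
      induction h with
      | refl => exact hpj
      | @tail b cc hb hbc ih =>
        have hc2 : A.mulVec p cc = p cc := hAp cc
        rw [← hc2]
        simp only [Matrix.mulVec, dotProduct]
        have h1 : A cc b * p b ≤ ∑ k, A cc k * p k :=
          Finset.single_le_sum (f := fun k => A cc k * p k)
            (fun k _ => mul_nonneg (hA0 cc k) (hp0 k)) (Finset.mem_univ b)
        have h2 : 0 < A cc b := by
          rw [hAapp, if_neg (Ne.symm hbc.1)]
          have := hbc.2
          nlinarith
        exact lt_of_lt_of_le (mul_pos h2 ih) h1
    intro i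
    have h := hprop i
    simp only [hp, ha] at h
    by_contra hneg
    push_neg at hneg
    rw [abs_of_nonpos hneg.le] at h
    linarith

lemma exists_stationary [Nonempty σ] (M : Matrix σ σ ℝ)
    (hMoff : ∀ i j : σ, i ≠ j → 0 ≤ M i j)
    (hMcol : ∀ j : σ, ∑ i, M i j = 0)
    (hirr : ∀ i j : σ, Relation.ReflTransGen (fun a b : σ => a ≠ b ∧ 0 < M b a) i j) :
    ∃ P : σ → ℝ, (∀ i, 0 ≤ P i) ∧ (∑ i, P i = 1) ∧ M.mulVec P = 0 ∧
      ∀ Q : σ → ℝ, (∀ i, 0 ≤ Q i) → (∑ i, Q i = 1) → M.mulVec Q = 0 → Q = P := by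
  have hdetT : Mᵀ.det = 0 := by
    rw [← Matrix.exists_mulVec_eq_zero_iff]
    refine ⟨fun _ => 1, ?_, ?_⟩
    · intro h
      have := congrFun h (Classical.arbitrary σ)
      norm_num at this
    · funext i
      simp only [Matrix.mulVec, dotProduct, Matrix.transpose_apply, mul_one]
      exact hMcol i
  have hdet : M.det = 0 := by rw [← Matrix.det_transpose]; exact hdetT
  obtain ⟨v, hvne, hvker⟩ := (Matrix.exists_mulVec_eq_zero_iff).mpr hdet
  obtain ⟨w, hwne, hwker, hw0⟩ :
      ∃ w : σ → ℝ, w ≠ 0 ∧ M.mulVec w = 0 ∧ ∀ i, 0 ≤ w i := by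
    rcases kernel_sign M hMoff hMcol hirr v hvker with hpos | hneg
    · exact ⟨v, hvne, hvker, hpos⟩
    · refine ⟨-v, neg_ne_zero.mpr hvne, ?_, fun i => by simpa using hneg i⟩
      rw [Matrix.mulVec_neg, hvker, neg_zero]
  set s : ℝ := ∑ i, w i with hs
  have hspos : 0 < s := by
    obtain ⟨j, hj⟩ := Function.ne_iff.mp hwne
    exact Finset.sum_pos' (fun i _ => hw0 i)
      ⟨j, Finset.mem_univ j, lt_of_le_of_ne (hw0 j) (Ne.symm hj)⟩
  set P : σ → ℝ := s⁻¹ • w with hP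
  have hP0 : ∀ i, 0 ≤ P i := fun i =>
    mul_nonneg (inv_nonneg.mpr hspos.le) (hw0 i)
  have hP1 : ∑ i, P i = 1 := by
    simp only [hP, Pi.smul_apply, smul_eq_mul]
    rw [← Finset.mul_sum, ← hs, inv_mul_cancel₀ hspos.ne']
  have hPker : M.mulVec P = 0 := by
    rw [hP, Matrix.mulVec_smul, hwker, smul_zero]
  refine ⟨P, hP0, hP1, hPker, ?_⟩
  intro Q hQ0 hQ1 hQker
  have hdker : M.mulVec (Q - P) = 0 := by
    rw [Matrix.mulVec_sub, hQker, hPker, sub_zero]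
  have hdsum : ∑ i, (Q i - P i) = 0 := by
    rw [Finset.sum_sub_distrib, hQ1, hP1, sub_self]
  funext i
  rcases kernel_sign M hMoff hMcol hirr (Q - P) hdker with hpos | hneg
  · have := (Finset.sum_eq_zero_iff_of_nonneg
      (fun i _ => by simpa using hpos i)).mp hdsum i (Finset.mem_univ i)
    simpa [sub_eq_zero] using this
  · have hdsum' : ∑ i, (P i - Q i) = 0 := by
      rw [Finset.sum_sub_distrib, hQ1, hP1, sub_self]
    have h := (Finset.sum_eq_zero_iff_of_nonneg
      (fun i _ => by have := hneg i; simp only [Pi.sub_apply] at this ⊢; linarith)).mp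
      hdsum' i (Finset.mem_univ i)
    linarith [h]

end TimeAvgAux

/-- For an irreducible transition matrix `M`, there is a stationary
distribution `P*` such that for every initial probability vector `P₀` the time averages
`(1/T) ∫_0^T exp(t M) P₀ dt` converge to `P*` as `T → ∞`.
(In this Mathlib version the matrix exponential `Matrix.exp ℝ` is `NormedSpace.exp ℝ`.) -/
theorem time_average_tendsto_stationary_of_irreducible
    {σ : Type*} [Fintype σ] [Nonempty σ] [DecidableEq σ]
    (M : Matrix σ σ ℝ)
    (hMoff : ∀ i j : σ, i ≠ j → 0 ≤ M i j)
    (hMcol : ∀ j : σ, ∑ i, M i j = 0)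
    (hirr : ∀ i j : σ, Relation.ReflTransGen (fun a b : σ => a ≠ b ∧ 0 < M b a) i j) :
    ∃ Pstar : σ → ℝ, (∀ i, 0 ≤ Pstar i) ∧ (∑ i, Pstar i = 1) ∧ M.mulVec Pstar = 0 ∧
      ∀ P₀ : σ → ℝ, (∀ i, 0 ≤ P₀ i) → (∑ i, P₀ i = 1) →
        Tendsto
          (fun T : ℝ => (1 / T) • ∫ t in (0:ℝ)..T, (NormedSpace.exp (t • M)).mulVec P₀)
          atTop (𝓝 Pstar) := by
  classical
  open NormedSpace TimeAvgAux in
  obtain ⟨P, hP0, hP1, hPker, huniq⟩ := exists_stationary M hMoff hMcol hirr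
  refine ⟨P, hP0, hP1, hPker, ?_⟩
  intro P₀ h₀0 h₀1
  set g : ℝ → σ → ℝ := fun t => (exp (t • M)).mulVec P₀ with hgdef
  have hexpcont : Continuous fun t : ℝ => exp (t • M) :=
    exp_continuous.comp (continuous_id.smul continuous_const)
  have hgcont : Continuous g := by
    refine continuous_pi fun i => ?_
    simp only [hgdef, Matrix.mulVec, dotProduct]
    exact continuous_finset_sum _ fun j _ =>
      ((continuous_apply j).comp ((continuous_apply i).comp hexpcont)).mul continuous_const
  have hgint : ∀ a b : ℝ, IntervalIntegrable g MeasureTheory.volume a b :=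
    fun a b => hgcont.intervalIntegrable a b
  set L2 : (σ → ℝ) →L[ℝ] (σ → ℝ) :=
    LinearMap.toContinuousLinearMap (Matrix.mulVecLin M) with hL2def
  have hL2 : ∀ x, L2 x = M.mulVec x := by
    intro x
    rw [hL2def]
    rw [LinearMap.coe_toContinuousLinearMap']
    rfl
  set LPlin : Matrix σ σ ℝ →ₗ[ℝ] (σ → ℝ) :=
    { toFun := fun X => X.mulVec P₀
      map_add' := fun X Y => Matrix.add_mulVec X Y P₀
      map_smul' := fun r X => Matrix.smul_mulVec r X P₀ } with hLPlin
  set LP : Matrix σ σ ℝ →L[ℝ] (σ → ℝ) := LinearMap.toContinuousLinearMap LPlin with hLPdef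
  have hLP : ∀ X : Matrix σ σ ℝ, LP X = X.mulVec P₀ := by
    intro X
    rw [hLPdef, LinearMap.coe_toContinuousLinearMap']
    rfl
  have hderiv : ∀ t : ℝ, HasDerivAt g (M.mulVec (g t)) t := by
    intro t
    have h1 := hasDerivAt_exp_smul_const' (𝕂 := ℝ) M t
    have h2 := LP.hasFDerivAt.comp_hasDerivAt t h1
    have h3 : (fun u : ℝ => LP (exp (u • M))) = g := by
      funext u; rw [hLP]
    have h4 : LP (M * exp (t • M)) = M.mulVec (g t) := by
      rw [hLP, hgdef]
      exact (Matrix.mulVec_mulVec P₀ M (exp (t • M))).symm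
    rw [← h4, ← h3]
    exact h2
  have hMgcont : Continuous fun x : σ → ℝ => M.mulVec x := by
    have h := L2.continuous
    have he : ⇑L2 = fun x : σ → ℝ => M.mulVec x := funext hL2
    rw [he] at h
    exact h
  have hFTC : ∀ T : ℝ, M.mulVec (∫ t in (0:ℝ)..T, g t) = g T - g 0 := by
    intro T
    have h1 : (∫ t in (0:ℝ)..T, M.mulVec (g t)) = g T - g 0 :=
      intervalIntegral.integral_eq_sub_of_hasDerivAt (fun t _ => hderiv t)
        ((hMgcont.comp hgcont).intervalIntegrable 0 T)
    calc M.mulVec (∫ t in (0:ℝ)..T, g t) = L2 (∫ t in (0:ℝ)..T, g t) := (hL2 _).symm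
      _ = ∫ t in (0:ℝ)..T, L2 (g t) := (L2.intervalIntegral_comp_comm (hgint 0 T)).symm
      _ = ∫ t in (0:ℝ)..T, M.mulVec (g t) := by simp only [hL2]
      _ = g T - g 0 := h1
  have hg0 : g 0 = P₀ := by
    rw [hgdef]
    show (exp ((0:ℝ) • M)).mulVec P₀ = P₀
    rw [zero_smul, exp_zero, Matrix.one_mulVec]
  set f : ℝ → σ → ℝ := fun T => (1 / T) • ∫ t in (0:ℝ)..T, g t with hfdef
  have hMf : ∀ T : ℝ, M.mulVec (f T) = (1 / T) • (g T - P₀) := by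
    intro T
    show M.mulVec ((1 / T) • ∫ t in (0:ℝ)..T, g t) = (1 / T) • (g T - P₀)
    rw [Matrix.mulVec_smul, hFTC T, hg0]
  have hcoord : ∀ (T : ℝ) (i : σ), (∫ t in (0:ℝ)..T, g t) i = ∫ t in (0:ℝ)..T, g t i := by
    intro T i
    exact ((ContinuousLinearMap.proj (R := ℝ) (φ := fun _ : σ => ℝ) i).intervalIntegral_comp_comm
      (hgint 0 T)).symm
  have hsum1 : ∀ t : ℝ, ∑ i, g t i = 1 := by
    intro t
    have hcs : ∀ j, ∑ i, exp (t • M) i j = 1 := by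
      intro j
      refine exp_colsum (fun j => ?_) j
      simp only [Matrix.smul_apply, smul_eq_mul]
      rw [← Finset.mul_sum, hMcol j, mul_zero]
    show ∑ i, (exp (t • M)).mulVec P₀ i = 1
    simp only [Matrix.mulVec, dotProduct]
    rw [Finset.sum_comm]
    calc ∑ j, ∑ i, exp (t • M) i j * P₀ j
        = ∑ j, (∑ i, exp (t • M) i j) * P₀ j := by
          refine Finset.sum_congr rfl fun j _ => ?_
          rw [Finset.sum_mul]
      _ = ∑ j, P₀ j := Finset.sum_congr rfl fun j _ => by rw [hcs j, one_mul]
      _ = 1 := h₀1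
  have hgnn : ∀ t : ℝ, 0 ≤ t → ∀ i, 0 ≤ g t i := by
    intro t ht i
    show 0 ≤ (exp (t • M)).mulVec P₀ i
    simp only [Matrix.mulVec, dotProduct]
    exact Finset.sum_nonneg fun j _ =>
      mul_nonneg (exp_smul_entry_nonneg hMoff ht i j) (h₀0 j)
  set S : Set (σ → ℝ) := {Q | (∀ i, 0 ≤ Q i) ∧ ∑ i, Q i = 1} with hSdef
  have hnorm : ∀ Q : σ → ℝ, Q ∈ S → ‖Q‖ ≤ 1 := by
    intro Q hQ
    refine (pi_norm_le_iff_of_nonneg zero_le_one).mpr fun i => ?_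
    rw [Real.norm_eq_abs, abs_of_nonneg (hQ.1 i)]
    calc Q i ≤ ∑ k, Q k := Finset.single_le_sum (fun k _ => hQ.1 k) (Finset.mem_univ i)
      _ = 1 := hQ.2
  have hmem : ∀ T : ℝ, 0 < T → f T ∈ S := by
    intro T hT
    have hint_coord : ∀ i : σ, IntervalIntegrable (fun t => g t i)
        MeasureTheory.volume 0 T :=
      fun i => ((continuous_apply i).comp hgcont).intervalIntegrable 0 T
    constructor
    · intro i
      have hfi : f T i = (1 / T) * ∫ t in (0:ℝ)..T, g t i := by
        show ((1 / T) • ∫ t in (0:ℝ)..T, g t) i = _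
        rw [Pi.smul_apply, smul_eq_mul, hcoord T i]
      rw [hfi]
      refine mul_nonneg (by positivity) ?_
      exact intervalIntegral.integral_nonneg hT.le (fun u hu => hgnn u hu.1 i)
    · have h1 : ∑ i, f T i = (1 / T) * ∫ t in (0:ℝ)..T, ∑ i, g t i := by
        rw [intervalIntegral.integral_finset_sum (fun i _ => hint_coord i)]
        rw [Finset.mul_sum]
        refine Finset.sum_congr rfl fun i _ => ?_
        show ((1 / T) • ∫ t in (0:ℝ)..T, g t) i = _
        rw [Pi.smul_apply, smul_eq_mul, hcoord T i]
      rw [h1]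
      have h2 : (∫ t in (0:ℝ)..T, ∑ i, g t i) = T := by
        rw [intervalIntegral.integral_congr (g := fun _ => (1:ℝ))
          (fun t _ => hsum1 t)]
        simp
      rw [h2]
      field_simp
  have hScompact : IsCompact S := by
    have hclosed : IsClosed S := by
      have h1 : S = (⋂ i, {Q : σ → ℝ | 0 ≤ Q i}) ∩ {Q : σ → ℝ | ∑ i, Q i = 1} := by
        ext Q
        simp [hSdef, Set.mem_iInter]
      rw [h1]
      exact IsClosed.inter
        (isClosed_iInter fun i => isClosed_le continuous_const (continuous_apply i))
        (isClosed_eq (continuous_finset_sum _ fun i _ => continuous_apply i) continuous_const)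
    have hbdd : Bornology.IsBounded S := by
      refine (Metric.isBounded_closedBall (x := (0 : σ → ℝ)) (r := 1)).subset ?_
      intro Q hQ
      rw [Metric.mem_closedBall, dist_zero_right]
      exact hnorm Q hQ
    exact Metric.isCompact_of_isClosed_isBounded hclosed hbdd
  have hgS : ∀ T : ℝ, 0 ≤ T → g T ∈ S := fun T hT => ⟨hgnn T hT, hsum1 T⟩
  have htend0 : Tendsto (fun T : ℝ => M.mulVec (f T)) atTop (𝓝 0) := by
    have hb : ∀ᶠ T in atTop, ‖M.mulVec (f T)‖ ≤ 2 / T := by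
      filter_upwards [eventually_ge_atTop (1:ℝ)] with T hT
      rw [hMf T, norm_smul]
      have hTpos : (0:ℝ) < T := by linarith
      have h1 : ‖g T - P₀‖ ≤ 2 := by
        calc ‖g T - P₀‖ ≤ ‖g T‖ + ‖P₀‖ := norm_sub_le _ _
          _ ≤ 1 + 1 := add_le_add (hnorm _ (hgS T (by linarith))) (hnorm _ ⟨h₀0, h₀1⟩)
          _ = 2 := by norm_num
      calc ‖(1/T : ℝ)‖ * ‖g T - P₀‖ ≤ (1/T) * 2 := by
            rw [Real.norm_eq_abs, abs_of_pos (by positivity)]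
            exact mul_le_mul_of_nonneg_left h1 (by positivity)
        _ = 2 / T := by ring
    have h2 : Tendsto (fun T : ℝ => 2 / T) atTop (𝓝 0) :=
      tendsto_const_nhds.div_atTop tendsto_id
    exact squeeze_zero_norm' hb h2
  rw [Metric.tendsto_atTop]
  by_contra hcon
  push_neg at hcon
  obtain ⟨ε, hε, hfr⟩ := hcon
  choose T hTge hTd using hfr
  set u : ℕ → σ → ℝ := fun n => f (T ((n : ℝ) + 1)) with hudef
  have humem : ∀ n, u n ∈ S := by
    intro n
    refine hmem _ (lt_of_lt_of_le ?_ (hTge ((n : ℝ) + 1)))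
    positivity
  obtain ⟨Q, hQS, φ, hφ, hconv⟩ := hScompact.tendsto_subseq humem
  have hTat : Tendsto (fun n : ℕ => T ((n : ℝ) + 1)) atTop atTop := by
    refine tendsto_atTop_mono (f := fun n : ℕ => (n : ℝ) + 1)
      (fun n => hTge ((n : ℝ) + 1)) ?_
    exact tendsto_atTop_add_const_right _ 1 tendsto_natCast_atTop_atTop
  have hMQ : M.mulVec Q = 0 := by
    have h1 : Tendsto (fun n => M.mulVec ((u ∘ φ) n)) atTop (𝓝 (M.mulVec Q)) :=
      (hMgcont.tendsto Q).comp hconv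
    have h2 : Tendsto (fun n => M.mulVec ((u ∘ φ) n)) atTop (𝓝 0) := by
      have h3 : Tendsto (fun n : ℕ => T ((φ n : ℝ) + 1)) atTop atTop :=
        hTat.comp hφ.tendsto_atTop
      exact htend0.comp h3
    exact tendsto_nhds_unique h1 h2
  have hQP : Q = P := huniq Q hQS.1 hQS.2 hMQ
  have hdist : Tendsto (fun n => dist ((u ∘ φ) n) P) atTop (𝓝 (dist Q P)) :=
    hconv.dist tendsto_const_nhds
  have hge2 : ε ≤ dist Q P :=
    ge_of_tendsto hdist (Filter.Eventually.of_forall fun n => hTd ((φ n : ℝ) + 1))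
  rw [hQP, dist_self] at hge2
  linarith
end

section
/- Let M be an irreducible transition matrix on a finite nonempty type σ. Then there exists a stationary distribution P* with strictly positive entries such that for every probability vector P₀, (Matrix.exp ℝ (t • M)).mulVec P₀ converges to P* as t → ∞. -/
open Filter Topology

namespace MCAux

open Matrix

variable {σ : Type*} [Fintype σ] [DecidableEq σ]

def entryCLM (i j : σ) : Matrix σ σ ℝ →L[ℝ] ℝ :=
  { toFun := fun A => A i j,
    map_add' := fun _ _ => rfl,
    map_smul' := fun _ _ => rfl,
    cont := continuous_id.matrix_elem i j }

lemma entry_hasSum (A : Matrix σ σ ℝ) (i j : σ) :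
    HasSum (fun n : ℕ => ((Nat.factorial n : ℝ)⁻¹) * (A ^ n) i j) (NormedSpace.exp A i j) := by
  letI : SeminormedRing (Matrix σ σ ℝ) := Matrix.linftyOpSemiNormedRing
  letI : NormedRing (Matrix σ σ ℝ) := Matrix.linftyOpNormedRing
  letI : NormedAlgebra ℝ (Matrix σ σ ℝ) := Matrix.linftyOpNormedAlgebra
  have h := NormedSpace.exp_series_hasSum_exp' (𝕂 := ℝ) A
  have h2 := (entryCLM i j).hasSum h
  simp only [entryCLM] at h2
  exact h2

lemma pow_entry_nonneg {A : Matrix σ σ ℝ} (hA : ∀ i j, 0 ≤ A i j) (n : ℕ) :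
    ∀ i j, 0 ≤ (A ^ n) i j := by
  induction n with
  | zero => intro i j; simp [Matrix.one_apply]; positivity
  | succ n ih =>
    intro i j
    rw [pow_succ, Matrix.mul_apply]
    exact Finset.sum_nonneg fun k _ => mul_nonneg (ih i k) (hA k j)

lemma exp_entry_nonneg {A : Matrix σ σ ℝ} (hA : ∀ i j, 0 ≤ A i j) (i j : σ) :
    0 ≤ NormedSpace.exp A i j :=
  (entry_hasSum A i j).nonneg fun n =>
    mul_nonneg (by positivity) (pow_entry_nonneg hA n i j)

lemma exp_entry_pos {A : Matrix σ σ ℝ} (hA : ∀ i j, 0 ≤ A i j) {i j : σ} {k : ℕ}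
    (hk : 0 < (A ^ k) i j) : 0 < NormedSpace.exp A i j := by
  have h := entry_hasSum A i j
  have hle := le_hasSum h k (fun n _ => mul_nonneg (by positivity) (pow_entry_nonneg hA n i j))
  have : 0 < ((Nat.factorial k : ℝ)⁻¹) * (A ^ k) i j := by positivity
  linarith

lemma exp_colsum {A : Matrix σ σ ℝ} (h : ∀ j, ∑ i, A i j = 0) (j : σ) :
    ∑ i, NormedSpace.exp A i j = 1 := by
  have hpow : ∀ n : ℕ, ∑ i, (A ^ n) i j = if n = 0 then 1 else 0 := by
    intro n
    induction n with
    | zero => simp [Matrix.one_apply]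
    | succ n ih =>
      rw [pow_succ', if_neg (Nat.succ_ne_zero n)]
      simp only [Matrix.mul_apply]
      rw [Finset.sum_comm]
      have : ∀ k, ∑ i, A i k * (A ^ n) k j = 0 := by
        intro k
        rw [← Finset.sum_mul, h k, zero_mul]
      simp [this]
  have h1 : HasSum (fun n : ℕ => ((Nat.factorial n : ℝ)⁻¹) * ∑ i, (A ^ n) i j)
      (∑ i, NormedSpace.exp A i j) := by
    simpa [Finset.mul_sum] using hasSum_sum (s := (Finset.univ : Finset σ))
      (f := fun i (n : ℕ) => ((Nat.factorial n : ℝ)⁻¹) * (A ^ n) i j)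
      (fun i _ => entry_hasSum A i j)
  have h2 : HasSum (fun n : ℕ => ((Nat.factorial n : ℝ)⁻¹) * ∑ i, (A ^ n) i j) 1 := by
    have := hasSum_single (f := fun n : ℕ => ((Nat.factorial n : ℝ)⁻¹) * ∑ i, (A ^ n) i j) 0
      (by intro b hb; simp [hpow b, hb])
    simpa [hpow, Matrix.one_apply] using this
  exact h1.unique h2

/-- Key contraction estimate. -/
lemma contraction {A : Matrix σ σ ℝ} {δ : ℝ} (hA : ∀ i j, δ ≤ A i j)
    (hcol : ∀ j, ∑ i, A i j = 1) {v : σ → ℝ} (hv : ∑ j, v j = 0) :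
    ∑ i, |A.mulVec v i| ≤ (1 - (Fintype.card σ : ℝ) * δ) * ∑ j, |v j| := by
  have step1 : ∀ i, |A.mulVec v i| ≤ ∑ j, (A i j - δ) * |v j| := by
    intro i
    have e1 : A.mulVec v i = ∑ j, (A i j - δ) * v j := by
      simp only [Matrix.mulVec, dotProduct, sub_mul, Finset.sum_sub_distrib,
        ← Finset.mul_sum, hv, mul_zero, sub_zero]
    rw [e1]
    refine (Finset.abs_sum_le_sum_abs _ _).trans (Finset.sum_le_sum fun j _ => ?_)
    rw [abs_mul, abs_of_nonneg (by linarith [hA i j])]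
  calc ∑ i, |A.mulVec v i| ≤ ∑ i, ∑ j, (A i j - δ) * |v j| :=
        Finset.sum_le_sum fun i _ => step1 i
    _ = ∑ j, (∑ i, (A i j - δ)) * |v j| := by
        rw [Finset.sum_comm]
        exact Finset.sum_congr rfl fun j _ => (Finset.sum_mul _ _ _).symm
    _ = (1 - (Fintype.card σ : ℝ) * δ) * ∑ j, |v j| := by
        rw [Finset.mul_sum]
        refine Finset.sum_congr rfl fun j _ => ?_
        rw [Finset.sum_sub_distrib, hcol j, Finset.sum_const, Finset.card_univ, nsmul_eq_mul]

lemma sum_mulVec {A : Matrix σ σ ℝ} (hcol : ∀ j, ∑ i, A i j = 1) (v : σ → ℝ) :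
    ∑ i, A.mulVec v i = ∑ j, v j := by
  simp only [Matrix.mulVec, dotProduct]
  rw [Finset.sum_comm]
  exact Finset.sum_congr rfl fun j _ => by rw [← Finset.sum_mul, hcol j, one_mul]

lemma tendsto_of_abs_sub_le {α : Type*} {l : Filter α} {g : α → ℝ} {a : ℝ} {bound : α → ℝ}
    (hb : Tendsto bound l (𝓝 0)) (h : ∀ᶠ x in l, |g x - a| ≤ bound x) :
    Tendsto g l (𝓝 a) := by
  rw [tendsto_iff_dist_tendsto_zero]
  simp only [Real.dist_eq]
  exact squeeze_zero' (h.mono fun x _ => abs_nonneg _) h hb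

lemma exists_pow_pos {B : Matrix σ σ ℝ} (hB : ∀ i j, 0 ≤ B i j) {r : σ → σ → Prop}
    (hr : ∀ a b, r a b → 0 < B b a) {i j : σ} (h : Relation.ReflTransGen r j i) :
    ∃ k, 0 < (B ^ k) i j := by
  induction h with
  | refl => exact ⟨0, by simp [Matrix.one_apply]⟩
  | @tail b c _ hbc ih =>
    obtain ⟨k, hk⟩ := ih
    refine ⟨k + 1, ?_⟩
    rw [pow_succ', Matrix.mul_apply]
    exact Finset.sum_pos'
      (fun m _ => mul_nonneg (hB _ _) (pow_entry_nonneg hB k _ _))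
      ⟨b, Finset.mem_univ b, mul_pos (hr _ _ hbc) hk⟩

lemma exp_smul_decomp (M : Matrix σ σ ℝ) (c t : ℝ) :
    NormedSpace.exp (t • M) =
      Real.exp (-(t * c)) • NormedSpace.exp (t • (M + c • (1 : Matrix σ σ ℝ))) := by
  have hcomm : Commute (t • (M + c • (1 : Matrix σ σ ℝ))) ((-(t * c)) • (1 : Matrix σ σ ℝ)) :=
    (Commute.one_right _).smul_right _
  have hsum : t • M = t • (M + c • (1 : Matrix σ σ ℝ)) + (-(t * c)) • (1 : Matrix σ σ ℝ) := by
    rw [smul_add, smul_smul, neg_smul, add_neg_cancel_right]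
  rw [hsum, Matrix.exp_add_of_commute _ _ hcomm]
  letI : SeminormedRing (Matrix σ σ ℝ) := Matrix.linftyOpSemiNormedRing
  letI : NormedRing (Matrix σ σ ℝ) := Matrix.linftyOpNormedRing
  letI : NormedAlgebra ℝ (Matrix σ σ ℝ) := Matrix.linftyOpNormedAlgebra
  rw [show ((-(t * c)) • (1 : Matrix σ σ ℝ)) = algebraMap ℝ _ (-(t * c)) from
    (Algebra.algebraMap_eq_smul_one _).symm]
  erw [← NormedSpace.algebraMap_exp_comm]
  rw [show NormedSpace.exp (-(t * c)) = Real.exp (-(t * c)) from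
    (congrFun Real.exp_eq_exp_ℝ _).symm]
  rw [Algebra.algebraMap_eq_smul_one, mul_smul_comm, mul_one]

end MCAux

open MCAux

/-- For an irreducible transition matrix `M`, there is a stationary
distribution `P*` with strictly positive entries such that for every initial probability
vector `P₀`, `exp(t M) P₀` converges to `P*` as `t → ∞`.
(In this Mathlib version the matrix exponential `Matrix.exp ℝ` is `NormedSpace.exp ℝ`.) -/
theorem solution_tendsto_positive_stationary_of_irreducible
    {σ : Type*} [Fintype σ] [Nonempty σ] [DecidableEq σ]
    (M : Matrix σ σ ℝ)
    (hMoff : ∀ i j : σ, i ≠ j → 0 ≤ M i j)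
    (hMcol : ∀ j : σ, ∑ i, M i j = 0)
    (hirr : ∀ i j : σ, Relation.ReflTransGen (fun a b : σ => a ≠ b ∧ 0 < M b a) i j) :
    ∃ Pstar : σ → ℝ, (∀ i, 0 < Pstar i) ∧ (∑ i, Pstar i = 1) ∧ M.mulVec Pstar = 0 ∧
      ∀ P₀ : σ → ℝ, (∀ i, 0 ≤ P₀ i) → (∑ i, P₀ i = 1) →
        Tendsto (fun t : ℝ => (NormedSpace.exp (t • M)).mulVec P₀) atTop (𝓝 Pstar) := by
  classical
  obtain ⟨j₀⟩ := (inferInstance : Nonempty σ)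
  set c : ℝ := 1 + ∑ k, |M k k| with hc_def
  have hc : ∀ j, 0 < M j j + c := by
    intro j
    have h1 : |M j j| ≤ ∑ k, |M k k| :=
      Finset.single_le_sum (f := fun k => |M k k|) (fun k _ => abs_nonneg _) (Finset.mem_univ j)
    have h2 : -(M j j) ≤ |M j j| := neg_le_abs _
    simp only [hc_def]; linarith
  set B : Matrix σ σ ℝ := M + c • (1 : Matrix σ σ ℝ) with hB_def
  have hBij : ∀ i j, B i j = M i j + (if i = j then c else 0) := by
    intro i j
    simp [hB_def, Matrix.one_apply, Matrix.add_apply, mul_ite]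
  have hB : ∀ i j, 0 ≤ B i j := by
    intro i j
    rw [hBij]
    by_cases h : i = j
    · subst h; rw [if_pos rfl]; linarith [hc i]
    · simp only [if_neg h, add_zero]; exact hMoff i j h
  -- decomposition of exp (t • M)
  have hdecomp : ∀ t : ℝ, NormedSpace.exp (t • M)
      = Real.exp (-(t * c)) • NormedSpace.exp (t • B) := fun t => exp_smul_decomp M c t
  -- nonnegativity of exp (t • M) for t ≥ 0
  have hnonneg : ∀ t : ℝ, 0 ≤ t → ∀ i j, 0 ≤ NormedSpace.exp (t • M) i j := by
    intro t ht i j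
    rw [hdecomp t]
    have htB : ∀ i j, 0 ≤ (t • B) i j := fun i j => by
      rw [Matrix.smul_apply, smul_eq_mul]; exact mul_nonneg ht (hB i j)
    exact mul_nonneg (Real.exp_pos _).le (exp_entry_nonneg htB i j)
  -- column sums of exp (t • M) equal 1
  have hcolsum : ∀ t : ℝ, ∀ j, ∑ i, NormedSpace.exp (t • M) i j = 1 := by
    intro t j
    refine exp_colsum (fun j => ?_) j
    simp only [Matrix.smul_apply, smul_eq_mul, ← Finset.mul_sum, hMcol j, mul_zero]
  -- the stochastic matrix S = exp M
  set S : Matrix σ σ ℝ := NormedSpace.exp M with hS_def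
  have hS1 : S = NormedSpace.exp ((1 : ℝ) • M) := by rw [one_smul]
  have hScol : ∀ j, ∑ i, S i j = 1 := by
    intro j; rw [hS1]; exact hcolsum 1 j
  have hS_pos : ∀ i j, 0 < S i j := by
    intro i j
    have h1B : ∀ i j, 0 ≤ ((1 : ℝ) • B) i j := by
      intro i j; rw [one_smul]; exact hB i j
    obtain ⟨k, hk⟩ := exists_pow_pos hB
      (r := fun a b : σ => a ≠ b ∧ 0 < M b a)
      (fun a b hab => by rw [hBij]; rw [if_neg (Ne.symm hab.1)]; linarith [hab.2]) (hirr j i)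
    rw [hS1, hdecomp 1]
    refine mul_pos (Real.exp_pos _) (exp_entry_pos h1B (k := k) ?_)
    rw [one_smul]; exact hk
  have hS_nonneg : ∀ i j, 0 ≤ S i j := fun i j => (hS_pos i j).le
  -- δ and the contraction ratio r
  set δ : ℝ := Finset.univ.inf' Finset.univ_nonempty (fun p : σ × σ => S p.1 p.2) with hδ_def
  have hδpos : 0 < δ := (Finset.lt_inf'_iff _).2 fun p _ => hS_pos p.1 p.2
  have hδle : ∀ i j, δ ≤ S i j := fun i j => Finset.inf'_le _ (Finset.mem_univ (i, j))
  set r : ℝ := 1 - (Fintype.card σ : ℝ) * δ with hr_def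
  have hcardpos : (0 : ℝ) < (Fintype.card σ : ℝ) := by
    exact_mod_cast Fintype.card_pos
  have hr1 : r < 1 := by
    have : 0 < (Fintype.card σ : ℝ) * δ := mul_pos hcardpos hδpos
    simp only [hr_def]; linarith
  have hr0 : 0 ≤ r := by
    have h1 : (Fintype.card σ : ℝ) * δ = ∑ _i : σ, δ := by
      rw [Finset.sum_const, Finset.card_univ, nsmul_eq_mul]
    have h2 : ∑ _i : σ, δ ≤ ∑ i, S i j₀ := Finset.sum_le_sum fun i _ => hδle i j₀
    rw [hScol j₀] at h2
    simp only [hr_def]; linarith [h1 ▸ h2]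
  -- the iteration
  set p₀ : σ → ℝ := fun _ => (Fintype.card σ : ℝ)⁻¹ with hp₀_def
  have hp₀sum : ∑ j, p₀ j = 1 := by
    simp only [hp₀_def, Finset.sum_const, Finset.card_univ, nsmul_eq_mul]
    field_simp
  set f : ℕ → σ → ℝ := fun k => (S ^ k).mulVec p₀ with hf_def
  have hf_succ : ∀ k, f (k + 1) = S.mulVec (f k) := by
    intro k
    simp only [hf_def]
    rw [pow_succ', ← Matrix.mulVec_mulVec]
  have hfsum : ∀ k, ∑ j, f k j = 1 := by
    intro k
    induction k with
    | zero => simpa [hf_def] using hp₀sum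
    | succ k ih => rw [hf_succ k, sum_mulVec hScol, ih]
  have hf_nonneg : ∀ k i, 0 ≤ f k i := by
    intro k
    induction k with
    | zero =>
      intro i
      simp only [hf_def, pow_zero, Matrix.one_mulVec, hp₀_def]
      positivity
    | succ k ih =>
      intro i
      rw [hf_succ k]
      exact Finset.sum_nonneg fun j _ => mul_nonneg (hS_nonneg i j) (ih j)
  -- the key iterated contraction bound
  have hiter : ∀ v : σ → ℝ, ∑ j, v j = 0 → ∀ k : ℕ,
      (∑ i, |(S ^ k).mulVec v i| ≤ r ^ k * ∑ j, |v j|) ∧ (∑ j, (S ^ k).mulVec v j = 0) := by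
    intro v hv k
    induction k with
    | zero => constructor <;> simp [Matrix.one_mulVec, hv]
    | succ k ih =>
      have hstep : (S ^ (k + 1)).mulVec v = S.mulVec ((S ^ k).mulVec v) := by
        rw [pow_succ', ← Matrix.mulVec_mulVec]
      constructor
      · rw [hstep]
        calc ∑ i, |S.mulVec ((S ^ k).mulVec v) i|
            ≤ r * ∑ i, |(S ^ k).mulVec v i| := contraction hδle hScol ih.2
          _ ≤ r * (r ^ k * ∑ j, |v j|) := mul_le_mul_of_nonneg_left ih.1 hr0
          _ = r ^ (k + 1) * ∑ j, |v j| := by ring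
      · rw [hstep, sum_mulVec hScol, ih.2]
  -- Cauchy sequence
  set C : ℝ := ∑ j, |f 1 j - f 0 j| with hC_def
  have hC0 : 0 ≤ C := Finset.sum_nonneg fun j _ => abs_nonneg _
  have hd10 : ∑ j, (f 1 - f 0) j = 0 := by
    simp only [Pi.sub_apply, Finset.sum_sub_distrib, hfsum, sub_self]
  have hf_diff : ∀ k, f (k + 1) - f k = (S ^ k).mulVec (f 1 - f 0) := by
    intro k
    rw [Matrix.mulVec_sub]
    congr 1
    · simp only [hf_def]
      rw [Matrix.mulVec_mulVec, pow_one, ← pow_succ]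
    · simp only [hf_def, pow_zero, Matrix.one_mulVec]
  have hcauchy : CauchySeq f := by
    refine cauchySeq_of_le_geometric r C hr1 fun k => ?_
    rw [dist_pi_le_iff (by positivity)]
    intro i
    rw [Real.dist_eq, abs_sub_comm]
    have h1 : |f (k + 1) i - f k i| ≤ ∑ i, |(S ^ k).mulVec (f 1 - f 0) i| := by
      rw [show f (k + 1) i - f k i = (S ^ k).mulVec (f 1 - f 0) i from by
        rw [← hf_diff k]; rfl]
      exact Finset.single_le_sum (f := fun i => |(S ^ k).mulVec (f 1 - f 0) i|)
        (fun i _ => abs_nonneg _) (Finset.mem_univ i)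
    have h2 := (hiter (f 1 - f 0) hd10 k).1
    calc |f (k + 1) i - f k i| ≤ r ^ k * ∑ j, |(f 1 - f 0) j| := le_trans h1 h2
      _ = C * r ^ k := by rw [hC_def]; ring_nf; rfl
  obtain ⟨Pstar, hPlim⟩ := cauchySeq_tendsto_of_complete hcauchy
  have hPlimi : ∀ i, Tendsto (fun k => f k i) atTop (𝓝 (Pstar i)) := fun i =>
    ((continuous_apply i).tendsto Pstar).comp hPlim
  have hPsum : ∑ i, Pstar i = 1 := by
    have h1 : Tendsto (fun k => ∑ i, f k i) atTop (𝓝 (∑ i, Pstar i)) :=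
      tendsto_finset_sum _ fun i _ => hPlimi i
    have h2 : Tendsto (fun k => ∑ i, f k i) atTop (𝓝 1) := by
      simpa [hfsum] using (tendsto_const_nhds : Tendsto (fun _ : ℕ => (1:ℝ)) atTop (𝓝 1))
    exact tendsto_nhds_unique h1 h2
  have hPnonneg : ∀ i, 0 ≤ Pstar i := fun i =>
    ge_of_tendsto (hPlimi i) (Eventually.of_forall fun k => hf_nonneg k i)
  have hmulVec_cont : ∀ (A : Matrix σ σ ℝ),
      Continuous (fun v : σ → ℝ => A.mulVec v) :=
    fun A => continuous_const.matrix_mulVec continuous_id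
  have hSfix : S.mulVec Pstar = Pstar := by
    have h1 : Tendsto (fun k => S.mulVec (f k)) atTop (𝓝 (S.mulVec Pstar)) :=
      ((hmulVec_cont S).tendsto Pstar).comp hPlim
    have h2 : Tendsto (fun k => S.mulVec (f k)) atTop (𝓝 Pstar) := by
      have : (fun k => S.mulVec (f k)) = fun k => f (k + 1) := by
        funext k; rw [hf_succ k]
      rw [this]
      exact hPlim.comp (tendsto_add_atTop_nat 1)
    exact tendsto_nhds_unique h1 h2
  have hfixk : ∀ k : ℕ, (S ^ k).mulVec Pstar = Pstar := by
    intro k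
    induction k with
    | zero => simp [Matrix.one_mulVec]
    | succ k ih => rw [pow_succ', ← Matrix.mulVec_mulVec, ih, hSfix]
  -- convergence for arbitrary start with sum 1
  have hqconv : ∀ q : σ → ℝ, ∑ j, q j = 1 →
      Tendsto (fun k : ℕ => (S ^ k).mulVec q) atTop (𝓝 Pstar) := by
    intro q hq
    rw [tendsto_pi_nhds]
    intro i
    set D : ℝ := ∑ j, |(q - Pstar) j| with hD_def
    have hsz : ∑ j, (q - Pstar) j = 0 := by
      simp only [Pi.sub_apply, Finset.sum_sub_distrib, hq, hPsum, sub_self]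
    refine tendsto_of_abs_sub_le (bound := fun k : ℕ => D * r ^ k) ?_ ?_
    · simpa using (tendsto_pow_atTop_nhds_zero_of_lt_one hr0 hr1).const_mul D
    · refine Eventually.of_forall fun k => ?_
      have he : (S ^ k).mulVec q i - Pstar i = (S ^ k).mulVec (q - Pstar) i := by
        rw [Matrix.mulVec_sub]
        simp [hfixk k]
      rw [he]
      have h1 : |(S ^ k).mulVec (q - Pstar) i| ≤ ∑ i, |(S ^ k).mulVec (q - Pstar) i| :=
        Finset.single_le_sum (f := fun i => |(S ^ k).mulVec (q - Pstar) i|)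
          (fun i _ => abs_nonneg _) (Finset.mem_univ i)
      have h2 := (hiter (q - Pstar) hsz k).1
      calc |(S ^ k).mulVec (q - Pstar) i| ≤ r ^ k * D := le_trans h1 h2
        _ = D * r ^ k := by ring
  -- S ^ k as exponential, and commutation
  have hSk : ∀ k : ℕ, S ^ k = NormedSpace.exp ((k : ℝ) • M) := by
    intro k
    rw [show ((k : ℝ) • M) = (k • M : Matrix σ σ ℝ) from Nat.cast_smul_eq_nsmul ℝ k M,
      Matrix.exp_nsmul]
  have hcomm : ∀ s u : ℝ, Commute (s • M) (u • M) :=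
    fun s u => ((Commute.refl M).smul_right u).smul_left s
  have hexp_mul_comm : ∀ s u : ℝ,
      NormedSpace.exp (s • M) * NormedSpace.exp (u • M)
        = NormedSpace.exp (u • M) * NormedSpace.exp (s • M) := by
    intro s u
    rw [← Matrix.exp_add_of_commute _ _ (hcomm s u),
      ← Matrix.exp_add_of_commute _ _ (hcomm u s), add_comm]
  -- Pstar is fixed by every exp (s • M), s ≥ 0
  have hexp_fix : ∀ s : ℝ, 0 ≤ s → (NormedSpace.exp (s • M)).mulVec Pstar = Pstar := by
    intro s hs
    set A : Matrix σ σ ℝ := NormedSpace.exp (s • M) with hA_def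
    have hq : ∑ j, A.mulVec p₀ j = 1 := by
      rw [sum_mulVec (hcolsum s) p₀, hp₀sum]
    have h1 : Tendsto (fun k : ℕ => (S ^ k).mulVec (A.mulVec p₀)) atTop (𝓝 Pstar) :=
      hqconv _ hq
    have h2 : ∀ k : ℕ, (S ^ k).mulVec (A.mulVec p₀) = A.mulVec (f k) := by
      intro k
      simp only [hf_def]
      rw [Matrix.mulVec_mulVec, Matrix.mulVec_mulVec, hSk k, hA_def, hexp_mul_comm]
    have h3 : Tendsto (fun k : ℕ => A.mulVec (f k)) atTop (𝓝 (A.mulVec Pstar)) :=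
      ((hmulVec_cont A).tendsto Pstar).comp hPlim
    refine tendsto_nhds_unique h3 ?_
    rwa [show (fun k : ℕ => A.mulVec (f k)) = fun k : ℕ => (S ^ k).mulVec (A.mulVec p₀)
      from funext fun k => (h2 k).symm]
  -- Pstar is fixed by exp (t • M) for all real t
  have hexp_fix_all : ∀ t : ℝ, (NormedSpace.exp (t • M)).mulVec Pstar = Pstar := by
    intro t
    rcases le_or_gt 0 t with ht | ht
    · exact hexp_fix t ht
    · have h1 := hexp_fix (-t) (by linarith)
      have h2 : NormedSpace.exp (t • M) * NormedSpace.exp ((-t) • M) = 1 := by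
        rw [← Matrix.exp_add_of_commute _ _ (hcomm t (-t)), ← add_smul, add_neg_cancel,
          zero_smul, NormedSpace.exp_zero]
      calc (NormedSpace.exp (t • M)).mulVec Pstar
          = (NormedSpace.exp (t • M)).mulVec ((NormedSpace.exp ((-t) • M)).mulVec Pstar) := by
            rw [h1]
        _ = (NormedSpace.exp (t • M) * NormedSpace.exp ((-t) • M)).mulVec Pstar := by
            rw [Matrix.mulVec_mulVec]
        _ = Pstar := by rw [h2, Matrix.one_mulVec]
  -- stationarity: M.mulVec Pstar = 0 via differentiation at 0
  have hMfix : M.mulVec Pstar = 0 := by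
    funext i
    letI : SeminormedRing (Matrix σ σ ℝ) := Matrix.linftyOpSemiNormedRing
    letI : NormedRing (Matrix σ σ ℝ) := Matrix.linftyOpNormedRing
    letI : NormedAlgebra ℝ (Matrix σ σ ℝ) := Matrix.linftyOpNormedAlgebra
    set F : Matrix σ σ ℝ →L[ℝ] ℝ :=
      { toFun := fun A => A.mulVec Pstar i,
        map_add' := fun A B => by simp [Matrix.add_mulVec],
        map_smul' := fun c A => by simp [Matrix.smul_mulVec],
        cont := (continuous_apply i).comp
          (continuous_id.matrix_mulVec continuous_const) } with hF_def
    have hD := hasDerivAt_exp_smul_const (𝕂 := ℝ) M (0 : ℝ)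
    have hF : HasDerivAt (fun u : ℝ => F (NormedSpace.exp (u • M)))
        (F (NormedSpace.exp ((0 : ℝ) • M) * M)) 0 :=
      F.hasFDerivAt.comp_hasDerivAt 0 hD
    have hconst : (fun u : ℝ => F (NormedSpace.exp (u • M))) = fun _ => Pstar i := by
      funext u
      show (NormedSpace.exp (u • M)).mulVec Pstar i = Pstar i
      rw [hexp_fix_all u]
    rw [hconst] at hF
    have h0 : F (NormedSpace.exp ((0 : ℝ) • M) * M) = M.mulVec Pstar i := by
      rw [zero_smul, NormedSpace.exp_zero, one_mul]
      rfl
    have := (hasDerivAt_const (0 : ℝ) (Pstar i)).unique hF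
    rw [h0] at this
    show M.mulVec Pstar i = (0 : σ → ℝ) i
    rw [Pi.zero_apply]
    exact this.symm
  -- positivity of Pstar
  have hPpos : ∀ i, 0 < Pstar i := by
    intro i
    have h1 : Pstar i = ∑ j, S i j * Pstar j := by
      conv_lhs => rw [← hSfix]
      rfl
    have h2 : ∑ j, δ * Pstar j ≤ ∑ j, S i j * Pstar j :=
      Finset.sum_le_sum fun j _ => mul_le_mul_of_nonneg_right (hδle i j) (hPnonneg j)
    have h3 : ∑ j, δ * Pstar j = δ := by rw [← Finset.mul_sum, hPsum, mul_one]
    rw [h1]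
    linarith [h3 ▸ h2]
  -- final convergence
  refine ⟨Pstar, hPpos, hPsum, hMfix, ?_⟩
  intro P₀ hP₀ hP₀sum
  rw [tendsto_pi_nhds]
  intro i
  set D : ℝ := ∑ j, |(P₀ - Pstar) j| with hD_def
  have hsz : ∑ j, (P₀ - Pstar) j = 0 := by
    simp only [Pi.sub_apply, Finset.sum_sub_distrib, hP₀sum, hPsum, sub_self]
  refine tendsto_of_abs_sub_le (bound := fun t : ℝ => D * r ^ (⌊t⌋₊ : ℕ)) ?_ ?_
  · have h1 : Tendsto (fun k : ℕ => D * r ^ k) atTop (𝓝 0) := by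
      simpa using (tendsto_pow_atTop_nhds_zero_of_lt_one hr0 hr1).const_mul D
    exact h1.comp tendsto_nat_floor_atTop
  · filter_upwards [eventually_ge_atTop (0 : ℝ)] with t ht
    set k : ℕ := ⌊t⌋₊ with hk_def
    set s : ℝ := t - k with hs_def
    have hs0 : 0 ≤ s := by
      have := Nat.floor_le ht
      simp only [hs_def]; linarith
    have hts : t = s + k := by simp [hs_def]
    have hsplit : NormedSpace.exp (t • M)
        = NormedSpace.exp (s • M) * (S ^ k) := by
      rw [hSk k, ← Matrix.exp_add_of_commute _ _ (hcomm s k), ← add_smul, ← hts]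
    have hkey : (NormedSpace.exp (t • M)).mulVec P₀ - Pstar
        = (NormedSpace.exp (s • M)).mulVec ((S ^ k).mulVec (P₀ - Pstar)) := by
      rw [Matrix.mulVec_sub, hfixk k, Matrix.mulVec_sub, hexp_fix s hs0,
        Matrix.mulVec_mulVec, ← hsplit]
    have habs : |(NormedSpace.exp (t • M)).mulVec P₀ i - Pstar i|
        ≤ ∑ i, |(NormedSpace.exp (s • M)).mulVec ((S ^ k).mulVec (P₀ - Pstar)) i| := by
      have : (NormedSpace.exp (t • M)).mulVec P₀ i - Pstar i
          = (NormedSpace.exp (s • M)).mulVec ((S ^ k).mulVec (P₀ - Pstar)) i := by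
        rw [← hkey]; rfl
      rw [this]
      exact Finset.single_le_sum
        (f := fun i => |(NormedSpace.exp (s • M)).mulVec ((S ^ k).mulVec (P₀ - Pstar)) i|)
        (fun i _ => abs_nonneg _) (Finset.mem_univ i)
    have hcontr := contraction (A := NormedSpace.exp (s • M)) (δ := 0)
      (fun i j => hnonneg s hs0 i j) (hcolsum s) (hiter (P₀ - Pstar) hsz k).2
    have hiterk := (hiter (P₀ - Pstar) hsz k).1
    calc |(NormedSpace.exp (t • M)).mulVec P₀ i - Pstar i|
        ≤ ∑ i, |(NormedSpace.exp (s • M)).mulVec ((S ^ k).mulVec (P₀ - Pstar)) i| := habs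
      _ ≤ (1 - (Fintype.card σ : ℝ) * 0) * ∑ i, |(S ^ k).mulVec (P₀ - Pstar) i| := hcontr
      _ = ∑ i, |(S ^ k).mulVec (P₀ - Pstar) i| := by ring
      _ ≤ r ^ k * D := hiterk
      _ = D * r ^ k := by ring
end

section
/- Let M be a transition matrix on a finite nonempty type σ and let P₀ be any probability vector. Then (Matrix.exp ℝ (t • M)).mulVec P₀ converges as t → ∞ to some stationary distribution of M. -/
set_option maxHeartbeats 1000000


open Filter Topology

namespace MasterEqAux

open NormedSpace

variable {σ : Type*} [Fintype σ] [Nonempty σ] [DecidableEq σ]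

/-- The exponential series of a matrix is summable. -/
lemma expSummable (𝕂 : Type*) [RCLike 𝕂] (A : Matrix σ σ 𝕂) :
    Summable fun n : ℕ => ((n.factorial : 𝕂))⁻¹ • A ^ n := by
  letI : SeminormedRing (Matrix σ σ 𝕂) := Matrix.linftyOpSemiNormedRing
  letI : NormedRing (Matrix σ σ 𝕂) := Matrix.linftyOpNormedRing
  letI : NormedAlgebra 𝕂 (Matrix σ σ 𝕂) := Matrix.linftyOpNormedAlgebra
  exact @NormedSpace.expSeries_summable' 𝕂 _ _ _ _ _ _ (FiniteDimensional.complete 𝕂 _) A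

/-- Entrywise `HasSum` description of the matrix exponential. -/
lemma exp_apply_hasSum (𝕂 : Type*) [RCLike 𝕂] (A : Matrix σ σ 𝕂) (i j : σ) :
    HasSum (fun n : ℕ => ((n.factorial : 𝕂))⁻¹ * ((A ^ n) i j)) (exp A i j) := by
  have h := (expSummable 𝕂 A).hasSum
  rw [NormedSpace.exp_eq_tsum 𝕂]
  have h1 := Pi.hasSum.mp h i
  have h2 := Pi.hasSum.mp h1 j
  simpa [Matrix.smul_apply, smul_eq_mul] using h2

lemma pow_entry_nonneg {A : Matrix σ σ ℝ} (hA : ∀ i j, 0 ≤ A i j) (n : ℕ) :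
    ∀ i j, 0 ≤ (A ^ n) i j := by
  induction n with
  | zero =>
    intro i j
    by_cases hij : i = j <;> simp [Matrix.one_apply, hij]
  | succ n ih =>
    intro i j
    rw [pow_succ, Matrix.mul_apply]
    exact Finset.sum_nonneg fun k _ => mul_nonneg (ih i k) (hA k j)

lemma exp_entry_nonneg {A : Matrix σ σ ℝ} (hA : ∀ i j, 0 ≤ A i j) (i j : σ) :
    0 ≤ exp A i j := by
  have h := exp_apply_hasSum ℝ A i j
  rw [← h.tsum_eq]
  exact tsum_nonneg fun n =>
    mul_nonneg (by positivity) (pow_entry_nonneg hA n i j)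

lemma colsum_pow_eq_zero {A : Matrix σ σ ℝ} (hA : ∀ j, ∑ i, A i j = 0) :
    ∀ n : ℕ, n ≠ 0 → ∀ j, ∑ i, (A ^ n) i j = 0 := by
  intro n
  induction n with
  | zero => intro h; exact absurd rfl h
  | succ n ih =>
    intro _ j
    rw [pow_succ]
    have hswap : ∑ i, (A ^ n * A) i j = ∑ k, (∑ i, (A ^ n) i k) * A k j := by
      simp_rw [Matrix.mul_apply]
      rw [Finset.sum_comm]
      simp_rw [← Finset.sum_mul]
    rw [hswap]
    rcases Nat.eq_zero_or_pos n with h0 | hpos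
    · subst h0
      have h1 : ∀ k, ∑ i, ((A : Matrix σ σ ℝ) ^ 0) i k = 1 := by
        intro k
        simp [Matrix.one_apply]
      simp_rw [h1, one_mul]
      exact hA j
    · have h2 : ∀ k, ∑ i, (A ^ n) i k = 0 := ih hpos.ne'
      simp [h2]

lemma exp_colsum {A : Matrix σ σ ℝ} (hA : ∀ j, ∑ i, A i j = 0) (j : σ) :
    ∑ i, exp A i j = 1 := by
  have h : HasSum (fun n : ℕ => ∑ i, ((n.factorial : ℝ))⁻¹ * ((A ^ n) i j))
      (∑ i, exp A i j) :=
    hasSum_sum fun i _ => exp_apply_hasSum ℝ A i j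
  have h' : HasSum (fun n : ℕ => ∑ i, ((n.factorial : ℝ))⁻¹ * ((A ^ n) i j)) 1 := by
    have hzero : ∀ n ∉ ({0} : Finset ℕ), (∑ i, ((n.factorial : ℝ))⁻¹ * ((A ^ n) i j)) = 0 := by
      intro n hn
      rw [← Finset.mul_sum, colsum_pow_eq_zero hA n (by simpa using hn), mul_zero]
    have h2 := hasSum_sum_of_ne_finset_zero (L := SummationFilter.unconditional ℕ) (s := ({0} : Finset ℕ)) hzero
    simpa [Matrix.one_apply] using h2
  exact h.unique h'

lemma exp_smul_one (𝕂 : Type*) [RCLike 𝕂] (a : 𝕂) :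
    exp (a • (1 : Matrix σ σ 𝕂)) = exp a • (1 : Matrix σ σ 𝕂) := by
  letI : SeminormedRing (Matrix σ σ 𝕂) := Matrix.linftyOpSemiNormedRing
  letI : NormedRing (Matrix σ σ 𝕂) := Matrix.linftyOpNormedRing
  letI : NormedAlgebra 𝕂 (Matrix σ σ 𝕂) := Matrix.linftyOpNormedAlgebra
  have h : a • (1 : Matrix σ σ 𝕂) = algebraMap 𝕂 (Matrix σ σ 𝕂) a :=
    (Algebra.algebraMap_eq_smul_one a).symm
  rw [h]
  have := (NormedSpace.algebraMap_exp_comm (𝔸 := Matrix σ σ 𝕂) a).symm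
  exact this.trans (Algebra.algebraMap_eq_smul_one _)

section Transition

variable {M : Matrix σ σ ℝ}

lemma exp_tM_nonneg (hMoff : ∀ i j, i ≠ j → 0 ≤ M i j) {t : ℝ} (ht : 0 ≤ t) (i j : σ) :
    0 ≤ exp (t • M) i j := by
  obtain ⟨c, hc⟩ : ∃ c : ℝ, ∀ j, -M j j ≤ c :=
    ⟨Finset.univ.sup' Finset.univ_nonempty (fun j => -M j j),
      fun j => Finset.le_sup' (fun j => -M j j) (Finset.mem_univ j)⟩
  set A := M + c • (1 : Matrix σ σ ℝ) with hA
  have hAnn : ∀ i j, 0 ≤ A i j := by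
    intro i j
    by_cases hij : i = j
    · subst hij
      have := hc i
      simp only [hA, Matrix.add_apply, Matrix.smul_apply, Matrix.one_apply_eq, smul_eq_mul,
        mul_one]
      linarith
    · simp only [hA, Matrix.add_apply, Matrix.smul_apply, Matrix.one_apply_ne hij, smul_eq_mul,
        mul_zero, add_zero]
      exact hMoff i j hij
  have hsplit : t • M = t • A + (-(t * c)) • (1 : Matrix σ σ ℝ) := by
    rw [hA]
    module
  have hcomm : Commute (t • A) ((-(t * c)) • (1 : Matrix σ σ ℝ)) := by
    apply Commute.smul_left
    apply Commute.smul_right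
    exact Commute.one_right _
  rw [hsplit, Matrix.exp_add_of_commute _ _ hcomm, exp_smul_one]
  have hrw : exp (t • A) * (exp (-(t * c)) • (1 : Matrix σ σ ℝ))
      = exp (-(t * c)) • exp (t • A) := by
    rw [mul_smul_comm, mul_one]
  rw [hrw, Matrix.smul_apply]
  have hpos : 0 < exp (-(t * c)) := by
    rw [← congrFun Real.exp_eq_exp_ℝ]
    exact Real.exp_pos _
  have htA : ∀ i j, 0 ≤ (t • A) i j := by
    intro i j
    rw [Matrix.smul_apply, smul_eq_mul]
    exact mul_nonneg ht (hAnn i j)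
  exact mul_nonneg hpos.le (exp_entry_nonneg htA i j)

lemma exp_tM_colsum (hMcol : ∀ j, ∑ i, M i j = 0) (t : ℝ) (j : σ) :
    ∑ i, exp (t • M) i j = 1 := by
  refine exp_colsum (fun j => ?_) j
  simp only [Matrix.smul_apply, smul_eq_mul]
  rw [← Finset.mul_sum, hMcol j, mul_zero]

lemma exp_tM_le_one (hMoff : ∀ i j, i ≠ j → 0 ≤ M i j) (hMcol : ∀ j, ∑ i, M i j = 0)
    {t : ℝ} (ht : 0 ≤ t) (i j : σ) : exp (t • M) i j ≤ 1 := by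
  have h := exp_tM_colsum hMcol t j
  calc exp (t • M) i j
      ≤ ∑ i', exp (t • M) i' j :=
        Finset.single_le_sum (fun i' _ => exp_tM_nonneg hMoff ht i' j) (Finset.mem_univ i)
    _ = 1 := h

/-- Complexification commutes with the exponential. -/
lemma exp_map (A : Matrix σ σ ℝ) :
    exp (A.map (algebraMap ℝ ℂ)) = (exp A).map (algebraMap ℝ ℂ) := by
  have hcont : Continuous ((algebraMap ℝ ℂ).mapMatrix : Matrix σ σ ℝ →+* Matrix σ σ ℂ) := by
    simp only [RingHom.mapMatrix]
    refine continuous_pi fun i => continuous_pi fun j => ?_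
    exact (continuous_algebraMap ℝ ℂ).comp ((continuous_apply j).comp (continuous_apply i))
  letI : SeminormedRing (Matrix σ σ ℝ) := Matrix.linftyOpSemiNormedRing
  letI : NormedRing (Matrix σ σ ℝ) := Matrix.linftyOpNormedRing
  letI : NormedAlgebra ℝ (Matrix σ σ ℝ) := Matrix.linftyOpNormedAlgebra
  letI : SeminormedRing (Matrix σ σ ℂ) := Matrix.linftyOpSemiNormedRing
  letI : NormedRing (Matrix σ σ ℂ) := Matrix.linftyOpNormedRing
  letI : NormedAlgebra ℝ (Matrix σ σ ℂ) := Matrix.linftyOpNormedAlgebra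
  letI : NormedAlgebra ℚ (Matrix σ σ ℝ) := Matrix.linftyOpNormedAlgebra
  letI : CompleteSpace (Matrix σ σ ℝ) := FiniteDimensional.complete ℝ _
  have h := NormedSpace.map_exp ((algebraMap ℝ ℂ).mapMatrix) hcont A
  simp only [RingHom.mapMatrix_apply] at h
  exact h.symm

lemma exp_smul_map (M : Matrix σ σ ℝ) (t : ℝ) :
    exp (t • M.map (algebraMap ℝ ℂ)) = (exp (t • M)).map (algebraMap ℝ ℂ) := by
  have h : t • M.map (algebraMap ℝ ℂ) = (t • M).map (algebraMap ℝ ℂ) := by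
    ext i j
    simp [Matrix.map_apply, Matrix.smul_apply, Complex.real_smul, smul_eq_mul]
  rw [h, exp_map]

/-- `HasSum` description of `exp A *ᵥ v` componentwise. -/
lemma exp_mulVec_apply_hasSum (A : Matrix σ σ ℂ) (v : σ → ℂ) (i : σ) :
    HasSum (fun n : ℕ => ((n.factorial : ℂ))⁻¹ * (((A ^ n).mulVec v) i))
      (((exp A).mulVec v) i) := by
  have h : ∀ j, HasSum (fun n : ℕ => (((n.factorial : ℂ))⁻¹ * ((A ^ n) i j)) * v j)
      (exp A i j * v j) :=
    fun j => (exp_apply_hasSum ℂ A i j).mul_right _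
  have h2 := hasSum_sum (s := (Finset.univ : Finset σ)) fun j _ => h j
  simpa [Matrix.mulVec, dotProduct, Finset.mul_sum, mul_assoc] using h2

/-- Key formula: action of the exponential on a generalized eigenvector. -/
lemma exp_mulVec_genEig (N : Matrix σ σ ℂ) (μ : ℂ) (k : ℕ) (v : σ → ℂ)
    (hv : ((N - μ • 1) ^ k).mulVec v = 0) (t : ℝ) :
    (exp (t • N)).mulVec v
      = Complex.exp ((t : ℂ) * μ) •
        ∑ n ∈ Finset.range k,
          (((n.factorial : ℂ))⁻¹ * (t : ℂ) ^ n) • ((N - μ • 1) ^ n).mulVec v := by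
  set B := N - μ • (1 : Matrix σ σ ℂ) with hB
  have hBpow : ∀ n, k ≤ n → (B ^ n).mulVec v = 0 := by
    intro n hn
    have hsplit : B ^ n = B ^ (n - k) * B ^ k := by
      rw [← pow_add]
      congr 1
      omega
    rw [hsplit, ← Matrix.mulVec_mulVec, hv, Matrix.mulVec_zero]
  have hsplit : t • N = ((t : ℂ) * μ) • (1 : Matrix σ σ ℂ) + t • B := by
    have h1 : ((t : ℂ) * μ) • (1 : Matrix σ σ ℂ) = t • (μ • (1 : Matrix σ σ ℂ)) := by
      rw [← smul_assoc, Complex.real_smul]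
    rw [hB, h1, smul_sub]
    abel
  have hcomm : Commute (((t : ℂ) * μ) • (1 : Matrix σ σ ℂ)) (t • B) := by
    apply Commute.smul_left
    apply Commute.smul_right
    exact Commute.one_left _
  rw [hsplit, Matrix.exp_add_of_commute _ _ hcomm, exp_smul_one,
    ← congrFun Complex.exp_eq_exp_ℂ _, smul_mul_assoc, one_mul, Matrix.smul_mulVec]
  congr 1
  funext i
  have h1 := exp_mulVec_apply_hasSum (t • B) v i
  have hterm : ∀ n : ℕ, ((n.factorial : ℂ))⁻¹ * ((((t • B) ^ n).mulVec v) i)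
      = (((n.factorial : ℂ))⁻¹ * (t : ℂ) ^ n) * (((B ^ n).mulVec v) i) := by
    intro n
    rw [smul_pow, Matrix.smul_mulVec, Pi.smul_apply]
    have : (t : ℝ) ^ n • (((B ^ n).mulVec v) i) = ((t : ℂ)) ^ n * (((B ^ n).mulVec v) i) := by
      rw [Complex.real_smul, Complex.ofReal_pow]
    rw [this]
    ring
  simp only [hterm] at h1
  have h3 : HasSum (fun n : ℕ => (((n.factorial : ℂ))⁻¹ * (t : ℂ) ^ n) * (((B ^ n).mulVec v) i))
      (∑ n ∈ Finset.range k, (((n.factorial : ℂ))⁻¹ * (t : ℂ) ^ n) * (((B ^ n).mulVec v) i)) := by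
    apply hasSum_sum_of_ne_finset_zero
    intro n hn
    rw [hBpow n (by simpa using hn), Pi.zero_apply, mul_zero]
  rw [h1.unique h3]
  rw [Finset.sum_apply]
  exact Finset.sum_congr rfl fun n _ => by rw [Pi.smul_apply, smul_eq_mul]

/-- vectors fixed by the flow when killed by the matrix -/
lemma exp_mulVec_fixed {N : Matrix σ σ ℂ} {v : σ → ℂ} (h : N.mulVec v = 0) (t : ℝ) :
    (exp (t • N)).mulVec v = v := by
  have h1 : ((N - (0 : ℂ) • 1) ^ 1).mulVec v = 0 := by simpa using h
  have h2 := exp_mulVec_genEig N 0 1 v h1 t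
  simpa using h2

end Transition

end MasterEqAux

section MainAux

open NormedSpace MasterEqAux
open scoped Matrix

variable {σ : Type*} [Fintype σ] [Nonempty σ] [DecidableEq σ]

/-- Boundedness of the flow applied to any vector. -/
lemma exp_mulVec_bound {M : Matrix σ σ ℝ} (hMoff : ∀ i j, i ≠ j → 0 ≤ M i j)
    (hMcol : ∀ j, ∑ i, M i j = 0) (u : σ → ℂ) {t : ℝ} (ht : 0 ≤ t) (i : σ) :
    ‖((exp (t • M.map (algebraMap ℝ ℂ))).mulVec u) i‖ ≤ ∑ j, ‖u j‖ := by
  rw [exp_smul_map]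
  have h : (((exp (t • M)).map (algebraMap ℝ ℂ)).mulVec u) i
      = ∑ j, ((exp (t • M) i j : ℝ) : ℂ) * u j := by
    simp [Matrix.mulVec, dotProduct, Matrix.map_apply, Complex.coe_algebraMap]
  rw [h]
  calc ‖∑ j, ((exp (t • M) i j : ℝ) : ℂ) * u j‖
      ≤ ∑ j, ‖((exp (t • M) i j : ℝ) : ℂ) * u j‖ := norm_sum_le _ _
    _ ≤ ∑ j, ‖u j‖ := by
        apply Finset.sum_le_sum
        intro j _
        rw [norm_mul, Complex.norm_real, Real.norm_eq_abs,
          abs_of_nonneg (exp_tM_nonneg hMoff ht i j)]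
        calc exp (t • M) i j * ‖u j‖ ≤ 1 * ‖u j‖ := by
              apply mul_le_mul_of_nonneg_right (exp_tM_le_one hMoff hMcol ht i j) (norm_nonneg _)
          _ = ‖u j‖ := one_mul _

lemma mulVec_sq_zero_of_bounded (N : Matrix σ σ ℂ) (u : σ → ℂ) (C : ℝ) (hCnn : 0 ≤ C)
    (hbdd : ∀ t : ℝ, 0 ≤ t → ∀ i, ‖((exp (t • N)).mulVec u) i‖ ≤ C)
    (h : N.mulVec (N.mulVec u) = 0) :
    N.mulVec u = 0 := by
  have h2 : ((N - (0 : ℂ) • 1) ^ 2).mulVec u = 0 := by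
    have hsq : (N - (0 : ℂ) • 1) ^ 2 = N * N := by
      rw [zero_smul, sub_zero, pow_two]
    rw [hsq, ← Matrix.mulVec_mulVec, h]
  have hfe : ∀ t : ℝ, (exp (t • N)).mulVec u = u + (t : ℂ) • N.mulVec u := by
    intro t
    rw [exp_mulVec_genEig N 0 2 u h2 t, Finset.sum_range_succ, Finset.sum_range_one]
    simp only [zero_smul, sub_zero, pow_zero, pow_one, Matrix.one_mulVec, Nat.factorial_zero,
      Nat.factorial_one, Nat.cast_one, inv_one, one_mul, mul_zero, mul_one, Complex.exp_zero,
      one_smul]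
  funext i
  rw [Pi.zero_apply]
  by_contra hw
  have hwpos : 0 < ‖(N.mulVec u) i‖ := by
    simpa [norm_pos_iff] using hw
  have hbound : ∀ t : ℝ, 0 ≤ t → t * ‖(N.mulVec u) i‖ ≤ C + ‖u i‖ := by
    intro t ht
    have hb := hbdd t ht i
    rw [hfe t] at hb
    have heq : t * ‖(N.mulVec u) i‖ = ‖(u + (t : ℂ) • N.mulVec u) i - u i‖ := by
      rw [Pi.add_apply, Pi.smul_apply, add_sub_cancel_left, smul_eq_mul, norm_mul,
        Complex.norm_real, Real.norm_eq_abs, abs_of_nonneg ht]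
    rw [heq]
    calc ‖(u + (t : ℂ) • N.mulVec u) i - u i‖
        ≤ ‖(u + (t : ℂ) • N.mulVec u) i‖ + ‖u i‖ := norm_sub_le _ _
      _ ≤ C + ‖u i‖ := add_le_add_left hb _
  have ht₀nn : 0 ≤ (C + ‖u i‖ + 1) / ‖(N.mulVec u) i‖ := by positivity
  have hfin := hbound _ ht₀nn
  rw [div_mul_cancel₀ _ hwpos.ne'] at hfin
  linarith

lemma mulVec_sq_zero {M : Matrix σ σ ℝ} (hMoff : ∀ i j, i ≠ j → 0 ≤ M i j)
    (hMcol : ∀ j, ∑ i, M i j = 0) (u : σ → ℂ)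
    (h : (M.map (algebraMap ℝ ℂ)).mulVec ((M.map (algebraMap ℝ ℂ)).mulVec u) = 0) :
    (M.map (algebraMap ℝ ℂ)).mulVec u = 0 := by
  refine mulVec_sq_zero_of_bounded _ u (∑ j, ‖u j‖)
    (Finset.sum_nonneg fun j _ => norm_nonneg _) ?_ h
  intro t ht i
  exact exp_mulVec_bound hMoff hMcol u ht i

lemma pow_mulVec_zero {M : Matrix σ σ ℝ} (hMoff : ∀ i j, i ≠ j → 0 ≤ M i j)
    (hMcol : ∀ j, ∑ i, M i j = 0) :
    ∀ (k : ℕ) (u : σ → ℂ), ((M.map (algebraMap ℝ ℂ)) ^ k).mulVec u = 0 →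
      (M.map (algebraMap ℝ ℂ)).mulVec u = 0 := by
  intro k
  induction k with
  | zero =>
    intro u h
    have hu : u = 0 := by simpa [Matrix.one_mulVec] using h
    rw [hu, Matrix.mulVec_zero]
  | succ k ih =>
    intro u h
    apply mulVec_sq_zero hMoff hMcol
    apply ih
    rw [Matrix.mulVec_mulVec, ← pow_succ]
    exact h

lemma toLin'_sub_smul_pow (N : Matrix σ σ ℂ) (μ : ℂ) (j : ℕ) :
    ∀ v : σ → ℂ, ((Matrix.toLin' N - μ • (1 : Module.End ℂ (σ → ℂ))) ^ j) v
      = ((N - μ • 1) ^ j).mulVec v := by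
  induction j with
  | zero => intro v; simp [Matrix.one_mulVec]
  | succ j ih =>
    intro v
    rw [pow_succ, pow_succ, Module.End.mul_apply]
    have hg : ∀ x : σ → ℂ, (Matrix.toLin' N - μ • (1 : Module.End ℂ (σ → ℂ))) x
        = (N - μ • 1).mulVec x := by
      intro x
      simp [LinearMap.sub_apply, LinearMap.smul_apply, Module.End.one_apply,
        Matrix.toLin'_apply, Matrix.sub_mulVec, Matrix.smul_mulVec, Matrix.one_mulVec]
    rw [hg, ih ((N - μ • 1).mulVec v), Matrix.mulVec_mulVec]

/-- Gershgorin-type bound: eigenvalues of `Mc` are either `0` or have negative real part. -/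
lemma eigenvalue_re_neg_or_zero {M : Matrix σ σ ℝ} (hMoff : ∀ i j, i ≠ j → 0 ≤ M i j)
    (hMcol : ∀ j, ∑ i, M i j = 0) {μ : ℂ}
    (hμ : Module.End.HasEigenvalue (Matrix.toLin' (M.map (algebraMap ℝ ℂ))) μ) :
    μ = 0 ∨ μ.re < 0 := by
  set Mc := M.map (algebraMap ℝ ℂ) with hMcdef
  have hdet : (Mc - μ • 1).det = 0 := by
    obtain ⟨v, hv, hv0⟩ := hμ.exists_hasEigenvector
    apply Matrix.exists_mulVec_eq_zero_iff.mp
    refine ⟨v, hv0, ?_⟩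
    have hveq : Mc.mulVec v = μ • v := by
      have := Module.End.mem_eigenspace_iff.mp hv
      rwa [Matrix.toLin'_apply] at this
    rw [Matrix.sub_mulVec, hveq, Matrix.smul_mulVec, Matrix.one_mulVec, sub_self]
  have hdetT : ((Mc)ᵀ - μ • 1).det = 0 := by
    have : ((Mc)ᵀ - μ • 1) = (Mc - μ • 1)ᵀ := by
      rw [Matrix.transpose_sub, Matrix.transpose_smul, Matrix.transpose_one]
    rw [this, Matrix.det_transpose]
    exact hdet
  obtain ⟨w, hw0, hw⟩ := Matrix.exists_mulVec_eq_zero_iff.mpr hdetT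
  have hμT : Module.End.HasEigenvalue (Matrix.toLin' (Mc)ᵀ) μ := by
    apply Module.End.hasEigenvalue_of_hasEigenvector (x := w)
    refine ⟨Module.End.mem_eigenspace_iff.mpr ?_, hw0⟩
    rw [Matrix.toLin'_apply]
    rw [Matrix.sub_mulVec, sub_eq_zero] at hw
    rw [hw, Matrix.smul_mulVec, Matrix.one_mulVec]
  obtain ⟨k, hk⟩ := eigenvalue_mem_ball hμT
  have hsum : (∑ j ∈ Finset.univ.erase k, ‖(Mc)ᵀ k j‖) = -M k k := by
    have hterm : ∀ j ∈ Finset.univ.erase k, ‖(Mc)ᵀ k j‖ = M j k := by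
      intro j hj
      have hjk : j ≠ k := Finset.ne_of_mem_erase hj
      have hMc : (Mc)ᵀ k j = ((M j k : ℝ) : ℂ) := by
        simp [hMcdef, Matrix.transpose_apply, Matrix.map_apply, Complex.coe_algebraMap]
      rw [hMc, Complex.norm_real, Real.norm_eq_abs, abs_of_nonneg (hMoff j k hjk)]
    rw [Finset.sum_congr rfl hterm]
    have hcol := hMcol k
    have hsplit := Finset.add_sum_erase Finset.univ (fun i => M i k) (Finset.mem_univ k)
    linarith [hsplit.symm ▸ hcol]
  rw [Metric.mem_closedBall, hsum] at hk
  have hkk : (Mc)ᵀ k k = ((M k k : ℝ) : ℂ) := by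
    simp [hMcdef, Matrix.transpose_apply, Matrix.map_apply, Complex.coe_algebraMap]
  rw [hkk] at hk
  set d := M k k with hd
  have habs : ‖μ - ((d : ℝ) : ℂ)‖ ≤ -d := by
    rwa [dist_eq_norm] at hk
  have hdnp : 0 ≤ -d := le_trans (norm_nonneg _) habs
  have hsq : (μ.re - d) ^ 2 + μ.im ^ 2 ≤ d ^ 2 := by
    have h1 : ‖μ - ((d : ℝ) : ℂ)‖ ^ 2 ≤ (-d) ^ 2 :=
      pow_le_pow_left₀ (norm_nonneg _) habs 2
    have h2 : ‖μ - ((d : ℝ) : ℂ)‖ ^ 2 = (μ.re - d) ^ 2 + μ.im ^ 2 := by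
      rw [Complex.sq_norm, Complex.normSq_apply]
      simp only [Complex.sub_re, Complex.sub_im, Complex.ofReal_re, Complex.ofReal_im, sub_zero]
      ring
    nlinarith [h1, h2]
  by_cases hre : μ.re < 0
  · exact Or.inr hre
  · left
    push_neg at hre
    have hd0 : d ≤ 0 := by linarith
    have hprod : d * μ.re ≤ 0 := mul_nonpos_iff.mpr (Or.inr ⟨hd0, hre⟩)
    have hre2 : μ.re ^ 2 = 0 := le_antisymm (by nlinarith [sq_nonneg μ.im]) (sq_nonneg _)
    have him2 : μ.im ^ 2 = 0 := le_antisymm (by nlinarith [sq_nonneg μ.re]) (sq_nonneg _)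
    exact Complex.ext (sq_eq_zero_iff.mp hre2) (sq_eq_zero_iff.mp him2)

/-- Convergence of scaled polynomial-exponential terms to zero. -/
lemma tendsto_exp_smul_poly {μ : ℂ} (hμ : μ.re < 0) (k : ℕ) (z : ℕ → σ → ℂ) :
    Tendsto (fun t : ℝ => Complex.exp ((t : ℂ) * μ) •
      ∑ n ∈ Finset.range k, (((n.factorial : ℂ))⁻¹ * (t : ℂ) ^ n) • z n) atTop (𝓝 0) := by
  have hrw : ∀ t : ℝ, Complex.exp ((t : ℂ) * μ) •
      ∑ n ∈ Finset.range k, (((n.factorial : ℂ))⁻¹ * (t : ℂ) ^ n) • z n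
      = ∑ n ∈ Finset.range k,
          (Complex.exp ((t : ℂ) * μ) * (((n.factorial : ℂ))⁻¹ * (t : ℂ) ^ n)) • z n := by
    intro t
    rw [Finset.smul_sum]
    exact Finset.sum_congr rfl fun n _ => by rw [smul_smul]
  have hterm : ∀ n : ℕ, Tendsto
      (fun t : ℝ => (Complex.exp ((t : ℂ) * μ) * (((n.factorial : ℂ))⁻¹ * (t : ℂ) ^ n)) • z n)
      atTop (𝓝 0) := by
    intro n
    rw [show (0 : σ → ℂ) = (0 : ℂ) • z n by simp]
    apply Tendsto.smul_const
    rw [tendsto_zero_iff_norm_tendsto_zero]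
    set b := -μ.re with hb
    have hbpos : 0 < b := by simp [hb]; linarith
    have hcomp : Tendsto (fun t : ℝ => (b * t) ^ n * Real.exp (-(b * t))) atTop (𝓝 0) :=
      (Real.tendsto_pow_mul_exp_neg_atTop_nhds_zero n).comp
        (tendsto_id.const_mul_atTop hbpos)
    have hmain : Tendsto (fun t : ℝ => (n.factorial : ℝ)⁻¹ * ((b ^ n)⁻¹ *
        ((b * t) ^ n * Real.exp (-(b * t))))) atTop (𝓝 0) := by
      simpa using (hcomp.const_mul ((b ^ n)⁻¹)).const_mul ((n.factorial : ℝ)⁻¹)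
    apply hmain.congr'
    filter_upwards [eventually_ge_atTop (0 : ℝ)] with t ht
    have h1 : ‖Complex.exp ((t : ℂ) * μ)‖ = Real.exp (t * μ.re) := by
      rw [Complex.norm_exp]
      congr 1
      simp [Complex.mul_re]
    have h2 : ‖((n.factorial : ℂ))⁻¹‖ = ((n.factorial : ℝ))⁻¹ := by
      simp
    have h3 : ‖((t : ℂ)) ^ n‖ = t ^ n := by
      rw [norm_pow, Complex.norm_real, Real.norm_eq_abs, abs_of_nonneg ht]
    rw [norm_mul, norm_mul, h1, h2, h3, mul_pow]
    have hbt : -(b * t) = t * μ.re := by rw [hb]; ring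
    rw [hbt]
    have hbn : b ^ n ≠ 0 := by positivity
    field_simp
  have hzero : Tendsto (fun t : ℝ => ∑ n ∈ Finset.range k,
      (Complex.exp ((t : ℂ) * μ) * (((n.factorial : ℂ))⁻¹ * (t : ℂ) ^ n)) • z n) atTop (𝓝 0) := by
    have := tendsto_finset_sum (Finset.range k) (fun n _ => hterm n)
    simpa using this
  exact hzero.congr fun t => (hrw t).symm

/-- Main complex convergence statement. -/
lemma complex_convergence {M : Matrix σ σ ℝ} (hMoff : ∀ i j, i ≠ j → 0 ≤ M i j)
    (hMcol : ∀ j, ∑ i, M i j = 0) (v : σ → ℂ) :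
    ∃ w : σ → ℂ, (M.map (algebraMap ℝ ℂ)).mulVec w = 0 ∧
      Tendsto (fun t : ℝ => (exp (t • M.map (algebraMap ℝ ℂ))).mulVec v) atTop (𝓝 w) := by
  set Mc := M.map (algebraMap ℝ ℂ) with hMcdef
  have hmem : v ∈ (⊤ : Submodule ℂ (σ → ℂ)) := trivial
  rw [← Module.End.iSup_maxGenEigenspace_eq_top (Matrix.toLin' Mc)] at hmem
  refine Submodule.iSup_induction (motive := fun u => ∃ w : σ → ℂ, Mc.mulVec w = 0 ∧
      Tendsto (fun t : ℝ => (exp (t • Mc)).mulVec u) atTop (𝓝 w)) _ hmem ?_ ?_ ?_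
  · intro μ u hu
    by_cases hu0 : u = 0
    · subst hu0
      exact ⟨0, Matrix.mulVec_zero _, by simpa [Matrix.mulVec_zero] using
        (tendsto_const_nhds : Tendsto (fun _ : ℝ => (0 : σ → ℂ)) atTop (𝓝 0))⟩
    obtain ⟨k, hk⟩ := (Module.End.mem_maxGenEigenspace _ _ _).mp hu
    have hmk : ((Mc - μ • 1) ^ k).mulVec u = 0 := by
      rw [← toLin'_sub_smul_pow]
      exact hk
    have hex : ∃ l, ((Mc - μ • 1) ^ l).mulVec u = 0 := ⟨k, hmk⟩
    have heig : Module.End.HasEigenvalue (Matrix.toLin' Mc) μ := by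
      classical
      set l := Nat.find hex with hldef
      have hl : ((Mc - μ • 1) ^ l).mulVec u = 0 := Nat.find_spec hex
      have hlne : l ≠ 0 := by
        intro h0
        apply hu0
        rw [h0, pow_zero, Matrix.one_mulVec] at hl
        exact hl
      have hprev : ¬ ((Mc - μ • 1) ^ (l - 1)).mulVec u = 0 :=
        Nat.find_min hex (by omega)
      set x := ((Mc - μ • 1) ^ (l - 1)).mulVec u with hxdef
      have hx : (Mc - μ • 1).mulVec x = 0 := by
        rw [hxdef, Matrix.mulVec_mulVec, ← pow_succ']
        have hl1 : l - 1 + 1 = l := by omega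
        rw [hl1]
        exact hl
      apply Module.End.hasEigenvalue_of_hasEigenvector (x := x)
      refine ⟨Module.End.mem_eigenspace_iff.mpr ?_, hprev⟩
      rw [Matrix.toLin'_apply]
      rw [Matrix.sub_mulVec, Matrix.smul_mulVec, Matrix.one_mulVec, sub_eq_zero] at hx
      exact hx
    rcases eigenvalue_re_neg_or_zero hMoff hMcol heig with h0 | hneg
    · subst h0
      have hker : Mc.mulVec u = 0 := by
        apply pow_mulVec_zero hMoff hMcol k
        simpa [hMcdef] using hmk
      refine ⟨u, hker, ?_⟩
      have : ∀ t : ℝ, (exp (t • Mc)).mulVec u = u := fun t => exp_mulVec_fixed hker t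
      simpa [this] using (tendsto_const_nhds : Tendsto (fun _ : ℝ => u) atTop (𝓝 u))
    · refine ⟨0, Matrix.mulVec_zero _, ?_⟩
      have hfe : ∀ t : ℝ, (exp (t • Mc)).mulVec u = Complex.exp ((t : ℂ) * μ) •
          ∑ n ∈ Finset.range k,
            (((n.factorial : ℂ))⁻¹ * (t : ℂ) ^ n) • ((Mc - μ • 1) ^ n).mulVec u :=
        fun t => exp_mulVec_genEig Mc μ k u hmk t
      exact (tendsto_exp_smul_poly hneg k _).congr fun t => (hfe t).symm
  · exact ⟨0, Matrix.mulVec_zero _, by simpa [Matrix.mulVec_zero] using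
      (tendsto_const_nhds : Tendsto (fun _ : ℝ => (0 : σ → ℂ)) atTop (𝓝 0))⟩
  · rintro x y ⟨w1, hw1, ht1⟩ ⟨w2, hw2, ht2⟩
    refine ⟨w1 + w2, by rw [Matrix.mulVec_add, hw1, hw2, add_zero], ?_⟩
    have := ht1.add ht2
    simpa [Matrix.mulVec_add] using this

end MainAux

open MasterEqAux

/-- For any transition matrix `M` and any initial probability vector `P₀`,
the solution `exp(t M) P₀` of the master equation converges as `t → ∞` to some
stationary distribution of `M`.
(In this Mathlib version the matrix exponential `Matrix.exp ℝ` is `NormedSpace.exp ℝ`.) -/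
theorem solution_tendsto_some_stationary
    {σ : Type*} [Fintype σ] [Nonempty σ] [DecidableEq σ]
    (M : Matrix σ σ ℝ)
    (hMoff : ∀ i j : σ, i ≠ j → 0 ≤ M i j)
    (hMcol : ∀ j : σ, ∑ i, M i j = 0)
    (P₀ : σ → ℝ) (hP₀nonneg : ∀ i, 0 ≤ P₀ i) (hP₀sum : ∑ i, P₀ i = 1) :
    ∃ P : σ → ℝ, (∀ i, 0 ≤ P i) ∧ (∑ i, P i = 1) ∧ M.mulVec P = 0 ∧
      Tendsto (fun t : ℝ => (NormedSpace.exp (t • M)).mulVec P₀) atTop (𝓝 P) := by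
  classical
  obtain ⟨w, hw0, hwt⟩ := complex_convergence hMoff hMcol (fun i => ((P₀ i : ℝ) : ℂ))
  set P : σ → ℝ := fun i => (w i).re with hPdef
  have hfn : ∀ (t : ℝ) (i : σ),
      (((NormedSpace.exp (t • M)).mulVec P₀ i : ℝ) : ℂ)
        = (NormedSpace.exp (t • M.map (algebraMap ℝ ℂ))).mulVec (fun i => ((P₀ i : ℝ) : ℂ)) i := by
    intro t i
    rw [exp_smul_map]
    simp only [Matrix.mulVec, dotProduct, Matrix.map_apply, Complex.coe_algebraMap]
    push_cast
    rfl
  have hPt : Tendsto (fun t : ℝ => (NormedSpace.exp (t • M)).mulVec P₀) atTop (𝓝 P) := by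
    rw [tendsto_pi_nhds]
    intro i
    have h1 : Tendsto (fun t : ℝ =>
        ((NormedSpace.exp (t • M.map (algebraMap ℝ ℂ))).mulVec (fun i => ((P₀ i : ℝ) : ℂ))) i)
        atTop (𝓝 (w i)) :=
      tendsto_pi_nhds.mp hwt i
    have h2 := (Complex.continuous_re.tendsto _).comp h1
    refine h2.congr fun t => ?_
    rw [Function.comp_apply, ← hfn t i, Complex.ofReal_re]
  have hPnn : ∀ i, 0 ≤ P i := by
    intro i
    apply ge_of_tendsto (tendsto_pi_nhds.mp hPt i)
    filter_upwards [eventually_ge_atTop (0 : ℝ)] with t ht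
    simp only [Matrix.mulVec, dotProduct]
    exact Finset.sum_nonneg fun j _ =>
      mul_nonneg (exp_tM_nonneg hMoff ht i j) (hP₀nonneg j)
  have hPsum : ∑ i, P i = 1 := by
    have hs : Tendsto (fun t : ℝ => ∑ i, ((NormedSpace.exp (t • M)).mulVec P₀) i)
        atTop (𝓝 (∑ i, P i)) :=
      tendsto_finset_sum _ fun i _ => tendsto_pi_nhds.mp hPt i
    have hconst : ∀ t : ℝ, ∑ i, ((NormedSpace.exp (t • M)).mulVec P₀) i = 1 := by
      intro t
      simp only [Matrix.mulVec, dotProduct]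
      rw [Finset.sum_comm]
      have : ∀ j, ∑ i, NormedSpace.exp (t • M) i j * P₀ j
          = (∑ i, NormedSpace.exp (t • M) i j) * P₀ j := by
        intro j
        rw [Finset.sum_mul]
      calc ∑ j, ∑ i, NormedSpace.exp (t • M) i j * P₀ j
          = ∑ j, (∑ i, NormedSpace.exp (t • M) i j) * P₀ j := Finset.sum_congr rfl fun j _ => this j
        _ = ∑ j, P₀ j := Finset.sum_congr rfl fun j _ => by
            rw [exp_tM_colsum hMcol t j, one_mul]
        _ = 1 := hP₀sum
    have hs' : Tendsto (fun _ : ℝ => (1 : ℝ)) atTop (𝓝 (∑ i, P i)) := hs.congr hconst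
    exact tendsto_nhds_unique hs' tendsto_const_nhds
  have hstat : M.mulVec P = 0 := by
    funext i
    have h0 : ((M.map (algebraMap ℝ ℂ)).mulVec w) i = 0 := by
      rw [hw0]; rfl
    have hre : (((M.map (algebraMap ℝ ℂ)).mulVec w) i).re = M.mulVec P i := by
      simp only [Matrix.mulVec, dotProduct, Matrix.map_apply]
      rw [Complex.re_sum]
      refine Finset.sum_congr rfl fun j _ => ?_
      rw [Complex.mul_re]
      show (algebraMap ℝ ℂ (M i j)).re * (w j).re - (algebraMap ℝ ℂ (M i j)).im * (w j).im
        = M i j * P j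
      simp [Complex.ofReal_re, Complex.ofReal_im, hPdef, Complex.coe_algebraMap]
    rw [Pi.zero_apply, ← hre, h0, Complex.zero_re]
  exact ⟨P, hPnn, hPsum, hstat, hPt⟩
end

section
/- Let M be an irreducible transition matrix on a finite nonempty type σ and let P₀ be a probability vector. Then for every t > 0, every entry of (Matrix.exp ℝ (t • M)).mulVec P₀ is strictly positive. -/
/-- Powers of an entrywise-nonnegative matrix are entrywise nonnegative. -/
private lemma pow_entry_nonneg_aux {σ : Type*} [Fintype σ] [DecidableEq σ]
    (A : Matrix σ σ ℝ) (hA : ∀ a b, 0 ≤ A a b) :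
    ∀ m : ℕ, ∀ a b, 0 ≤ (A ^ m) a b := by
  intro m
  induction m with
  | zero =>
    intro a b
    by_cases hab : a = b <;> simp [pow_zero, Matrix.one_apply, hab]
  | succ m ih =>
    intro a b
    rw [pow_succ, Matrix.mul_apply]
    exact Finset.sum_nonneg fun k _ => mul_nonneg (ih a k) (hA k b)

open NormedSpace in
/-- Key auxiliary lemma: if a matrix has nonnegative entries and some power has a
positive `(i, j)` entry, then `exp` has a positive `(i, j)` entry. -/
private lemma exp_entry_pos_aux {σ : Type*} [Fintype σ] [DecidableEq σ]
    (A : Matrix σ σ ℝ) (hA : ∀ a b, 0 ≤ A a b)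
    {i j : σ} {n : ℕ} (hn : 0 < (A ^ n) i j) :
    0 < (NormedSpace.exp A) i j := by
  have hpow := pow_entry_nonneg_aux A hA
  have hsum : Summable fun m : ℕ => ((m.factorial : ℝ)⁻¹) • A ^ m := by
    letI : SeminormedRing (Matrix σ σ ℝ) := Matrix.linftyOpSemiNormedRing
    letI : NormedRing (Matrix σ σ ℝ) := Matrix.linftyOpNormedRing
    letI : NormedAlgebra ℝ (Matrix σ σ ℝ) := Matrix.linftyOpNormedAlgebra
    exact expSeries_summable' A
  have hexp : NormedSpace.exp A = ∑' m : ℕ, ((m.factorial : ℝ)⁻¹) • A ^ m := by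
    rw [exp_eq_tsum ℝ]
  have hHS : HasSum (fun m : ℕ => ((m.factorial : ℝ)⁻¹) • A ^ m) (NormedSpace.exp A) := by
    rw [hexp]; exact hsum.hasSum
  have hHS' : HasSum (fun m : ℕ => (((m.factorial : ℝ)⁻¹) • A ^ m) i j)
      ((NormedSpace.exp A) i j) := by
    let e : Matrix σ σ ℝ →+ ℝ :=
      { toFun := fun X => X i j, map_zero' := rfl, map_add' := fun _ _ => rfl }
    have hcont : Continuous e := by
      show Continuous fun X : Matrix σ σ ℝ => X i j
      exact (continuous_apply j).comp (continuous_apply i)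
    exact hHS.map e hcont
  have hterm_nonneg : ∀ m : ℕ, 0 ≤ (((m.factorial : ℝ)⁻¹) • A ^ m) i j := by
    intro m
    simp only [Matrix.smul_apply, smul_eq_mul]
    exact mul_nonneg (by positivity) (hpow m i j)
  have hterm_pos : 0 < (((n.factorial : ℝ)⁻¹) • A ^ n) i j := by
    simp only [Matrix.smul_apply, smul_eq_mul]
    exact mul_pos (by positivity) hn
  calc 0 < (((n.factorial : ℝ)⁻¹) • A ^ n) i j := hterm_pos
    _ ≤ (NormedSpace.exp A) i j :=
      le_hasSum hHS' n fun m _ => hterm_nonneg m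

/-- For an irreducible transition matrix `M` and a probability vector `P₀`,
every entry of `exp(t M) P₀` is strictly positive for every `t > 0`.
(In this Mathlib version the matrix exponential `Matrix.exp ℝ` is `NormedSpace.exp`.) -/
theorem solution_pos_of_irreducible
    {σ : Type*} [Fintype σ] [Nonempty σ] [DecidableEq σ]
    (M : Matrix σ σ ℝ)
    (hMoff : ∀ i j : σ, i ≠ j → 0 ≤ M i j)
    (hMcol : ∀ j : σ, ∑ i, M i j = 0)
    (hirr : ∀ i j : σ, Relation.ReflTransGen (fun a b : σ => a ≠ b ∧ 0 < M b a) i j)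
    (P₀ : σ → ℝ) (hP₀nonneg : ∀ i, 0 ≤ P₀ i) (hP₀sum : ∑ i, P₀ i = 1) :
    ∀ t : ℝ, 0 < t → ∀ i : σ, 0 < ((NormedSpace.exp (t • M)).mulVec P₀) i := by
  intro t ht i
  -- shift the matrix to make all entries nonnegative
  set c : ℝ := 1 + ∑ k, |M k k| with hc_def
  have hc_pos : ∀ a : σ, 0 < M a a + c := by
    intro a
    have h1 : |M a a| ≤ ∑ k, |M k k| :=
      Finset.single_le_sum (f := fun k => |M k k|) (fun k _ => abs_nonneg _)
        (Finset.mem_univ a)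
    have h3 : -(M a a) ≤ |M a a| := neg_le_abs _
    rw [hc_def]; linarith
  set A : Matrix σ σ ℝ := M + c • (1 : Matrix σ σ ℝ) with hA_def
  have hA_entry : ∀ a b : σ, A a b = M a b + (if a = b then c else 0) := by
    intro a b
    simp [hA_def, Matrix.add_apply, Matrix.smul_apply, Matrix.one_apply, mul_ite]
  have hA_nonneg : ∀ a b : σ, 0 ≤ A a b := by
    intro a b
    rw [hA_entry]
    by_cases hab : a = b
    · subst hab; simpa using (hc_pos a).le
    · simpa [hab] using hMoff a b hab
  have hApow := pow_entry_nonneg_aux A hA_nonneg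
  -- powers of A are positive along reachable pairs
  have hreach : ∀ a b : σ, Relation.ReflTransGen (fun x y : σ => x ≠ y ∧ 0 < M y x) a b →
      ∃ n : ℕ, 0 < (A ^ n) b a := by
    intro a b h
    induction h with
    | refl => exact ⟨0, by simp [Matrix.one_apply]⟩
    | @tail p q hp hpq ih =>
      obtain ⟨n, hn⟩ := ih
      refine ⟨n + 1, ?_⟩
      rw [pow_succ', Matrix.mul_apply]
      have hApq : 0 < A q p := by
        rw [hA_entry]
        have hqp : q ≠ p := Ne.symm hpq.1
        have := hpq.2
        simp only [hqp, if_false, add_zero]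
        exact this
      exact Finset.sum_pos' (fun k _ => mul_nonneg (hA_nonneg q k) (hApow n k a))
        ⟨p, Finset.mem_univ p, mul_pos hApq hn⟩
  -- positivity of all entries of exp (t • A)
  have hexpA_pos : ∀ a b : σ, 0 < (NormedSpace.exp (t • A)) a b := by
    intro a b
    obtain ⟨n, hn⟩ := hreach b a (hirr b a)
    have htA_nonneg : ∀ x y, 0 ≤ (t • A) x y := fun x y =>
      mul_nonneg ht.le (hA_nonneg x y)
    have htn : 0 < ((t • A) ^ n) a b := by
      rw [smul_pow, Matrix.smul_apply, smul_eq_mul]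
      exact mul_pos (pow_pos ht n) hn
    exact exp_entry_pos_aux (t • A) htA_nonneg htn
  -- relate exp (t • M) to exp (t • A)
  have hdecomp : t • M = t • A + (-(t * c)) • (1 : Matrix σ σ ℝ) := by
    rw [hA_def, smul_add, smul_smul, add_assoc, ← add_smul]
    simp
  have hcomm : Commute (t • A) ((-(t * c)) • (1 : Matrix σ σ ℝ)) :=
    (Commute.one_right (t • A)).smul_right _
  have hsplit : NormedSpace.exp (t • M) =
      NormedSpace.exp (t • A) * NormedSpace.exp ((-(t * c)) • (1 : Matrix σ σ ℝ)) := by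
    rw [hdecomp]
    exact Matrix.exp_add_of_commute _ _ hcomm
  have hexp_scalar : NormedSpace.exp ((-(t * c)) • (1 : Matrix σ σ ℝ)) =
      Real.exp (-(t * c)) • (1 : Matrix σ σ ℝ) := by
    letI : SeminormedRing (Matrix σ σ ℝ) := Matrix.linftyOpSemiNormedRing
    letI : NormedRing (Matrix σ σ ℝ) := Matrix.linftyOpNormedRing
    letI : NormedAlgebra ℝ (Matrix σ σ ℝ) := Matrix.linftyOpNormedAlgebra
    have h1 : ((-(t * c)) • (1 : Matrix σ σ ℝ)) =
        algebraMap ℝ (Matrix σ σ ℝ) (-(t * c)) := by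
      rw [Algebra.algebraMap_eq_smul_one]
    rw [h1]
    have h2 := NormedSpace.algebraMap_exp_comm (𝔸 := Matrix σ σ ℝ) (-(t * c))
    rw [Algebra.algebraMap_eq_smul_one, ← Real.exp_eq_exp_ℝ] at h2
    exact h2.symm
  have hexpM : ∀ a b : σ, (NormedSpace.exp (t • M)) a b =
      Real.exp (-(t * c)) * (NormedSpace.exp (t • A)) a b := by
    intro a b
    rw [hsplit, hexp_scalar, mul_smul_comm, mul_one, Matrix.smul_apply, smul_eq_mul]
  have hexpM_pos : ∀ a b : σ, 0 < (NormedSpace.exp (t • M)) a b := by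
    intro a b
    rw [hexpM]
    exact mul_pos (Real.exp_pos _) (hexpA_pos a b)
  -- conclude
  have hPexists : ∃ j : σ, 0 < P₀ j := by
    by_contra h
    push_neg at h
    have hz : ∀ j : σ, P₀ j = 0 := fun j => le_antisymm (h j) (hP₀nonneg j)
    simp [hz] at hP₀sum
  obtain ⟨j, hj⟩ := hPexists
  rw [Matrix.mulVec, dotProduct]
  exact Finset.sum_pos'
    (fun k _ => mul_nonneg (hexpM_pos i k).le (hP₀nonneg k))
    ⟨j, Finset.mem_univ j, mul_pos (hexpM_pos i j) hj⟩
end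

section
/- Let M be a transition matrix on a finite nonempty type σ. Then for every t ∈ ℝ and every j, the column sums of Matrix.exp ℝ (t • M) equal one: ∑ i, (Matrix.exp ℝ (t • M)) i j = 1. Consequently, for every probability vector P₀ the total mass ∑ i, ((Matrix.exp ℝ (t • M)).mulVec P₀) i = 1 is conserved in time. -/
open NormedSpace

lemma colsum_pow_aux {σ : Type*} [Fintype σ] [Nonempty σ] [DecidableEq σ]
    (A : Matrix σ σ ℝ) (hAcol : ∀ j : σ, ∑ i, A i j = 0) :
    ∀ n : ℕ, ∀ j : σ, ∑ i, (A ^ n) i j = if n = 0 then 1 else 0 := by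
  intro n
  induction n with
  | zero =>
    intro j
    simp [Matrix.one_apply, Finset.sum_ite_eq]
  | succ n ih =>
    intro j
    have : (A ^ (n + 1)) = A ^ n * A := pow_succ A n
    simp only [this, Matrix.mul_apply]
    rw [Finset.sum_comm]
    have : ∀ k, ∑ i, (A ^ n) i k * A k j = (if n = 0 then 1 else 0) * A k j := by
      intro k
      rw [← Finset.sum_mul, ih k]
    simp only [this]
    rcases Nat.eq_zero_or_pos n with h | h
    · simp [h, hMcol_aux A hAcol j]
    · have hn : n ≠ 0 := Nat.pos_iff_ne_zero.mp h
      simp [hn]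
where
  hMcol_aux (A : Matrix σ σ ℝ) (hAcol : ∀ j : σ, ∑ i, A i j = 0) (j : σ) :
      ∑ k, A k j = 0 := hAcol j

/-- For a transition matrix `M`, the column sums of `exp(t M)` are one for
every time `t`; consequently the total mass of `exp(t M) P₀` equals one for every
probability vector `P₀`.
(In this Mathlib version the matrix exponential `Matrix.exp ℝ` is `NormedSpace.exp`.) -/
theorem exp_colSum_one_and_mass_conserved
    {σ : Type*} [Fintype σ] [Nonempty σ] [DecidableEq σ]
    (M : Matrix σ σ ℝ)
    (hMoff : ∀ i j : σ, i ≠ j → 0 ≤ M i j)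
    (hMcol : ∀ j : σ, ∑ i, M i j = 0) :
    (∀ t : ℝ, ∀ j : σ, ∑ i, (NormedSpace.exp (t • M)) i j = 1) ∧
    (∀ t : ℝ, ∀ P₀ : σ → ℝ, (∀ i, 0 ≤ P₀ i) → (∑ i, P₀ i = 1) →
      ∑ i, ((NormedSpace.exp (t • M)).mulVec P₀) i = 1) := by
  have key : ∀ t : ℝ, ∀ j : σ, ∑ i, (NormedSpace.exp (t • M)) i j = 1 := by
    intro t j
    -- set up the normed algebra structure on matrices
    letI : SeminormedRing (Matrix σ σ ℝ) := Matrix.linftyOpSemiNormedRing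
    letI : NormedRing (Matrix σ σ ℝ) := Matrix.linftyOpNormedRing
    letI : NormedAlgebra ℝ (Matrix σ σ ℝ) := Matrix.linftyOpNormedAlgebra
    have hsum : HasSum (fun n : ℕ => ((n.factorial : ℝ)⁻¹) • (t • M) ^ n)
        (NormedSpace.exp (t • M)) := NormedSpace.exp_series_hasSum_exp' (t • M)
    -- the column-sum functional as a continuous linear map
    let l : Matrix σ σ ℝ →ₗ[ℝ] ℝ :=
      { toFun := fun A => ∑ i, A i j
        map_add' := by intro A B; simp [Finset.sum_add_distrib]
        map_smul' := by intro c A; simp [Finset.mul_sum] }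
    let L : Matrix σ σ ℝ →L[ℝ] ℝ := LinearMap.toContinuousLinearMap l
    have hsum2 : HasSum (fun n : ℕ => L (((n.factorial : ℝ)⁻¹) • (t • M) ^ n))
        (L (NormedSpace.exp (t • M))) := L.hasSum hsum
    have hAcol : ∀ k : σ, ∑ i, (t • M) i k = 0 := by
      intro k
      simp only [Matrix.smul_apply, smul_eq_mul, ← Finset.mul_sum, hMcol k, mul_zero]
    have hterm : ∀ n : ℕ, L (((n.factorial : ℝ)⁻¹) • (t • M) ^ n) = if n = 0 then 1 else 0 := by
      intro n
      have : L (((n.factorial : ℝ)⁻¹) • (t • M) ^ n) = ((n.factorial : ℝ)⁻¹) * ∑ i, ((t • M) ^ n) i j := by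
        rw [map_smul, smul_eq_mul]
        rfl
      rw [this, colsum_pow_aux (t • M) hAcol n j]
      rcases eq_or_ne n 0 with h | h <;> simp [h]
    simp only [hterm] at hsum2
    have hone : HasSum (fun n : ℕ => if n = 0 then (1:ℝ) else 0) 1 := by
      exact hasSum_ite_eq (0 : ℕ) (1 : ℝ)
    have : L (NormedSpace.exp (t • M)) = 1 := hsum2.unique hone
    simpa [L, l] using this
  refine ⟨key, ?_⟩
  intro t P₀ _ hP₀sum
  simp only [Matrix.mulVec, dotProduct]
  rw [Finset.sum_comm]
  calc ∑ k, ∑ i, (NormedSpace.exp (t • M)) i k * P₀ k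
      = ∑ k, (∑ i, (NormedSpace.exp (t • M)) i k) * P₀ k := by
        simp [Finset.sum_mul]
    _ = ∑ k, P₀ k := by
        refine Finset.sum_congr rfl fun k _ => ?_
        rw [key t k, one_mul]
    _ = 1 := hP₀sum
end

section
/- Let M be a transition matrix on a finite nonempty type σ. Then for every t ≥ 0, all entries of Matrix.exp ℝ (t • M) are nonnegative; in particular, for every probability vector P₀ and t ≥ 0, every entry of (Matrix.exp ℝ (t • M)).mulVec P₀ lies in the interval [0, 1]. -/
attribute [local instance] Matrix.linftyOpNormedRing Matrix.linftyOpNormedAlgebra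

open NormedSpace Filter Topology

section
set_option linter.unusedSectionVars false
variable {σ : Type*} [Fintype σ] [Nonempty σ] [DecidableEq σ]

lemma pow_entry_nonneg (A : Matrix σ σ ℝ) (hA : ∀ i j, 0 ≤ A i j) :
    ∀ n : ℕ, ∀ i j, 0 ≤ (A ^ n) i j := by
  intro n
  induction n with
  | zero => intro i j; by_cases h : i = j <;> simp [pow_zero, Matrix.one_apply, h]
  | succ n ih =>
    intro i j
    rw [pow_succ, Matrix.mul_apply]
    exact Finset.sum_nonneg fun k _ => mul_nonneg (ih i k) (hA k j)

lemma exp_entry_nonneg (A : Matrix σ σ ℝ) (hA : ∀ i j, 0 ≤ A i j) :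
    ∀ i j, 0 ≤ (exp A) i j := by
  intro i j
  have h : HasSum (fun n : ℕ => ((n.factorial : ℝ)⁻¹) • A ^ n) (exp A) := by
    have h0 := expSeries_hasSum_exp (𝕂 := ℝ) A
    simp only [expSeries_apply_eq] at h0
    exact h0
  have hcont : Continuous fun B : Matrix σ σ ℝ => B i j :=
    (continuous_apply j).comp (continuous_apply i)
  have h2 : Tendsto (fun s : Finset ℕ => ∑ n ∈ s, (((n.factorial : ℝ)⁻¹) • A ^ n) i j)
      atTop (𝓝 ((exp A) i j)) := by
    have := (hcont.tendsto _).comp h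
    simpa [Function.comp_def, Matrix.sum_apply, Matrix.smul_apply, smul_eq_mul] using this
  refine ge_of_tendsto' h2 fun s => ?_
  refine Finset.sum_nonneg fun n _ => ?_
  simp only [Matrix.smul_apply, smul_eq_mul]
  exact mul_nonneg (by positivity) (pow_entry_nonneg A hA n i j)

lemma ones_mul_exp (A : Matrix σ σ ℝ) (hcol : ∀ j, ∑ i, A i j = 0) :
    (Matrix.of fun _ _ : σ => (1 : ℝ)) * exp A = Matrix.of fun _ _ => (1 : ℝ) := by
  set N : Matrix σ σ ℝ := Matrix.of fun _ _ => (1 : ℝ) with hN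
  have hNA : N * A = 0 := by
    ext i j
    simp [hN, Matrix.mul_apply, hcol j]
  have h : HasSum (fun n : ℕ => ((n.factorial : ℝ)⁻¹) • A ^ n) (exp A) := by
    have h0 := expSeries_hasSum_exp (𝕂 := ℝ) A
    simp only [expSeries_apply_eq] at h0
    exact h0
  have hL : HasSum (fun n : ℕ => N * (((n.factorial : ℝ)⁻¹) • A ^ n)) (N * exp A) :=
    (ContinuousLinearMap.mul ℝ (Matrix σ σ ℝ) N).hasSum h
  have hfun : ∀ n : ℕ, N * (((n.factorial : ℝ)⁻¹) • A ^ n) =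
      if n = 0 then N else 0 := by
    intro n
    cases n with
    | zero => simp
    | succ m =>
      have : N * A ^ (m + 1) = 0 := by
        rw [pow_succ', ← mul_assoc, hNA, zero_mul]
      simp [Matrix.mul_smul, this]
  rw [funext hfun] at hL
  exact hL.unique (by simpa using hasSum_ite_eq (0 : ℕ) N)

end

/-- For a transition matrix `M` and `t ≥ 0`, all entries of `exp(t M)` are
nonnegative; in particular every entry of `exp(t M) P₀` lies in `[0, 1]` for every
probability vector `P₀`.
(In this Mathlib version the matrix exponential `Matrix.exp ℝ` is `NormedSpace.exp ℝ`.) -/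
theorem exp_entries_nonneg_and_solution_mem_Icc
    {σ : Type*} [Fintype σ] [Nonempty σ] [DecidableEq σ]
    (M : Matrix σ σ ℝ)
    (hMoff : ∀ i j : σ, i ≠ j → 0 ≤ M i j)
    (hMcol : ∀ j : σ, ∑ i, M i j = 0) :
    (∀ t : ℝ, 0 ≤ t → ∀ i j : σ, 0 ≤ (NormedSpace.exp (t • M)) i j) ∧
    (∀ P₀ : σ → ℝ, (∀ i, 0 ≤ P₀ i) → (∑ i, P₀ i = 1) →
      ∀ t : ℝ, 0 ≤ t → ∀ i : σ,
        ((NormedSpace.exp (t • M)).mulVec P₀) i ∈ Set.Icc (0 : ℝ) 1) := by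
  -- entrywise nonnegativity
  have hnonneg : ∀ t : ℝ, 0 ≤ t → ∀ i j : σ, 0 ≤ (NormedSpace.exp (t • M)) i j := by
    intro t ht i j
    set c : ℝ := ∑ k, |M k k| with hc
    have hc0 : ∀ k, |M k k| ≤ c :=
      fun k => Finset.single_le_sum (fun k _ => abs_nonneg (M k k)) (Finset.mem_univ k)
    set A : Matrix σ σ ℝ := M + c • (1 : Matrix σ σ ℝ) with hA
    have hAent : ∀ i j, 0 ≤ A i j := by
      intro i j
      by_cases h : i = j
      · subst h
        have := hc0 i
        simp only [hA, Matrix.add_apply, Matrix.smul_apply, Matrix.one_apply_eq, smul_eq_mul,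
          mul_one]
        linarith [neg_abs_le (M i i)]
      · simpa [hA, Matrix.one_apply_ne h] using hMoff i j h
    have hsplit : t • M = t • A + (-(t * c)) • (1 : Matrix σ σ ℝ) := by
      rw [hA]; rw [smul_add]; module
    have hcomm : Commute (t • A) ((-(t * c)) • (1 : Matrix σ σ ℝ)) := by
      exact (Commute.one_right (t • A)).smul_right (-(t * c))
    have hexp : NormedSpace.exp (t • M)
        = NormedSpace.exp (t • A) * NormedSpace.exp ((-(t * c)) • (1 : Matrix σ σ ℝ)) := by
      rw [hsplit]
      exact NormedSpace.exp_add_of_commute hcomm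
    have hscal : NormedSpace.exp ((-(t * c)) • (1 : Matrix σ σ ℝ))
        = Real.exp (-(t * c)) • (1 : Matrix σ σ ℝ) := by
      rw [← Algebra.algebraMap_eq_smul_one, ← Algebra.algebraMap_eq_smul_one, Real.exp_eq_exp_ℝ]
      exact (NormedSpace.algebraMap_exp_comm (𝔸 := Matrix σ σ ℝ) _).symm
    have hEA : ∀ i j, 0 ≤ (NormedSpace.exp (t • A)) i j := by
      apply exp_entry_nonneg
      intro i j
      exact smul_nonneg ht (hAent i j) |>.trans_eq rfl
    rw [hexp, hscal, mul_smul_comm, mul_one]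
    simp only [Matrix.smul_apply, smul_eq_mul]
    exact mul_nonneg (Real.exp_pos _).le (hEA i j)
  refine ⟨hnonneg, ?_⟩
  intro P₀ hP0 hPs t ht i
  have hcolsum : ∀ j, ∑ k, (NormedSpace.exp (t • M)) k j = 1 := by
    intro j
    have hcol' : ∀ j, ∑ k, (t • M) k j = 0 := by
      intro j
      simp [Matrix.smul_apply, ← Finset.mul_sum, hMcol j]
    have := ones_mul_exp (t • M) hcol'
    have h2 := congrFun (congrFun this j) j
    simpa [Matrix.mul_apply] using h2
  constructor
  · exact Finset.sum_nonneg fun j _ => mul_nonneg (hnonneg t ht i j) (hP0 j)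
  · have hle : ∀ j, (NormedSpace.exp (t • M)) i j ≤ 1 := by
      intro j
      calc (NormedSpace.exp (t • M)) i j
          ≤ ∑ k, (NormedSpace.exp (t • M)) k j :=
            Finset.single_le_sum (fun k _ => hnonneg t ht k j) (Finset.mem_univ i)
        _ = 1 := hcolsum j
    calc ((NormedSpace.exp (t • M)).mulVec P₀) i
        = ∑ j, (NormedSpace.exp (t • M)) i j * P₀ j := rfl
      _ ≤ ∑ j, 1 * P₀ j :=
          Finset.sum_le_sum fun j _ => mul_le_mul_of_nonneg_right (hle j) (hP0 j)
      _ = 1 := by simpa using hPs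
end

section
/- Let M be a transition matrix on a finite nonempty type σ. Then every complex eigenvalue λ of M (i.e. λ in the spectrum of the complexification M.map Complex.ofReal) satisfies Re λ ≤ 0. -/
/-- Every complex eigenvalue of a transition matrix (element of the
spectrum of its complexification) has nonpositive real part. -/
theorem transition_matrix_spectrum_re_nonpos
    {σ : Type*} [Fintype σ] [Nonempty σ] [DecidableEq σ]
    (M : Matrix σ σ ℝ)
    (hMoff : ∀ i j : σ, i ≠ j → 0 ≤ M i j)
    (hMcol : ∀ j : σ, ∑ i, M i j = 0) :
    ∀ μ ∈ spectrum ℂ (M.map Complex.ofReal), μ.re ≤ 0 := by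
  intro μ hμ
  set A : Matrix σ σ ℂ := (M.map Complex.ofReal).transpose with hAdef
  -- transpose has the same spectrum
  have hA : μ ∈ spectrum ℂ A := by
    rw [spectrum.mem_iff, Matrix.isUnit_iff_isUnit_det] at hμ ⊢
    have : (algebraMap ℂ (Matrix σ σ ℂ) μ - A) = (algebraMap ℂ (Matrix σ σ ℂ) μ - M.map Complex.ofReal).transpose := by
      rw [Matrix.transpose_sub]
      congr 1
      simp [Matrix.algebraMap_eq_diagonal, Matrix.diagonal_transpose]
    rwa [this, Matrix.det_transpose]
  have heig : Module.End.HasEigenvalue (Matrix.toLin' A) μ := by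
    rw [Module.End.hasEigenvalue_iff_mem_spectrum]
    rwa [show Matrix.toLin' A = Matrix.toLinAlgEquiv' A from rfl,
      AlgEquiv.spectrum_eq Matrix.toLinAlgEquiv' A]
  obtain ⟨k, hk⟩ := eigenvalue_mem_ball heig
  rw [Metric.mem_closedBall] at hk
  have hdiag : A k k = (M k k : ℂ) := rfl
  have hsum : ∑ j ∈ Finset.univ.erase k, ‖A k j‖ = -M k k := by
    have h1 : ∀ j ∈ Finset.univ.erase k, ‖A k j‖ = M j k := by
      intro j hj
      have hjk : j ≠ k := Finset.ne_of_mem_erase hj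
      have : A k j = (M j k : ℂ) := rfl
      rw [this, Complex.norm_real]
      exact Real.norm_of_nonneg (hMoff j k hjk)
    rw [Finset.sum_congr rfl h1]
    have := hMcol k
    rw [← Finset.add_sum_erase _ _ (Finset.mem_univ k)] at this
    linarith
  have hre : |μ.re - M k k| ≤ ‖μ - (M k k : ℂ)‖ := by
    have : (μ - (M k k : ℂ)).re = μ.re - M k k := by simp
    rw [← this]
    exact Complex.abs_re_le_norm _
  rw [hdiag, hsum] at hk
  have := abs_le.mp (le_trans hre (le_trans (le_of_eq (by rw [dist_eq_norm] at hk; exact (dist_eq_norm _ _).symm)) hk))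
  linarith [this.2]
end

section
/- Let M be a transition matrix on a finite nonempty type σ. Then every nonzero complex eigenvalue λ of M (i.e. λ ≠ 0 in the spectrum of M.map Complex.ofReal) satisfies Re λ < 0; in particular M has no nonzero purely imaginary eigenvalue. -/
open Matrix

lemma spectrum_transpose_mem {n : Type*} [Fintype n] [DecidableEq n]
    {A : Matrix n n ℂ} {μ : ℂ} (h : μ ∈ spectrum ℂ A) : μ ∈ spectrum ℂ Aᵀ := by
  rw [spectrum.mem_iff] at h ⊢
  intro hu
  apply h
  rw [Matrix.isUnit_iff_isUnit_det] at hu ⊢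
  rw [show algebraMap ℂ (Matrix n n ℂ) μ - A = (algebraMap ℂ (Matrix n n ℂ) μ - Aᵀ)ᵀ by
    simp [Matrix.transpose_sub, Matrix.algebraMap_eq_diagonal], Matrix.det_transpose]
  exact hu

/-- Every nonzero complex eigenvalue of a transition matrix has strictly
negative real part; in particular a transition matrix has no nonzero purely imaginary
eigenvalue. -/
theorem transition_matrix_spectrum_re_neg_of_ne_zero
    {σ : Type*} [Fintype σ] [Nonempty σ] [DecidableEq σ]
    (M : Matrix σ σ ℝ)
    (hMoff : ∀ i j : σ, i ≠ j → 0 ≤ M i j)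
    (hMcol : ∀ j : σ, ∑ i, M i j = 0) :
    ∀ μ ∈ spectrum ℂ (M.map Complex.ofReal), μ ≠ 0 → μ.re < 0 := by
  intro μ hμ hne
  have hT : μ ∈ spectrum ℂ (M.map Complex.ofReal)ᵀ := spectrum_transpose_mem hμ
  have hEig : Module.End.HasEigenvalue (Matrix.toLin' (M.map Complex.ofReal)ᵀ) μ := by
    rw [Module.End.hasEigenvalue_iff_mem_spectrum]
    rwa [show Matrix.toLin' (M.map Complex.ofReal)ᵀ
        = Matrix.toLinAlgEquiv (Pi.basisFun ℂ σ) (M.map Complex.ofReal)ᵀ from rfl,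
      AlgEquiv.spectrum_eq]
  obtain ⟨k, hk⟩ := eigenvalue_mem_ball hEig
  rw [Metric.mem_closedBall] at hk
  -- rewrite the radius
  have hrad : ∑ j ∈ Finset.univ.erase k, ‖(M.map Complex.ofReal)ᵀ k j‖
      = ∑ j ∈ Finset.univ.erase k, M j k := by
    refine Finset.sum_congr rfl fun j hj => ?_
    have hjk : j ≠ k := (Finset.mem_erase.mp hj).1
    simp [Matrix.transpose_apply, Matrix.map_apply, Complex.norm_real,
      abs_of_nonneg (hMoff j k hjk)]
  have hsum : ∑ j ∈ Finset.univ.erase k, M j k = -M k k := by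
    have := hMcol k
    have h2 : M k k + ∑ j ∈ Finset.univ.erase k, M j k = 0 := by
      rw [← Finset.add_sum_erase _ _ (Finset.mem_univ k)] at this
      exact this
    linarith
  have hkk : M k k ≤ 0 := by
    have : 0 ≤ ∑ j ∈ Finset.univ.erase k, M j k :=
      Finset.sum_nonneg fun j hj => hMoff j k (Finset.mem_erase.mp hj).1
    linarith [hsum]
  have hdist : dist μ ((M k k : ℂ)) ≤ -M k k := by
    rw [hrad, hsum] at hk
    simpa [Matrix.transpose_apply, Matrix.map_apply] using hk
  rw [Complex.dist_eq] at hdist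
  have hsq := pow_le_pow_left₀ (norm_nonneg _) hdist 2
  rw [Complex.sq_norm] at hsq
  simp only [Complex.normSq_apply, Complex.sub_re, Complex.sub_im, Complex.ofReal_re,
    Complex.ofReal_im, sub_zero] at hsq
  by_contra hcon
  push_neg at hcon
  have hx : μ.re = 0 := by
    nlinarith [sq_nonneg μ.im, mul_nonneg hcon (neg_nonneg.mpr hkk)]
  have hy : μ.im = 0 := by nlinarith [sq_nonneg (μ.re - M k k)]
  exact hne (Complex.ext hx hy)
end

section
/- Let M be a transition matrix on a finite nonempty type σ whose transition graph has no directed cycle, i.e. no state i is reachable from itself by a nonempty path of edges (the transitive closure of the edge relation is irreflexive). Then every complex eigenvalue of M (element of the spectrum of M.map Complex.ofReal) is real, i.e. has zero imaginary part. -/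
/-- If the transition graph of a transition matrix `M` has no directed
cycle (the transitive closure of the edge relation is irreflexive), then every complex
eigenvalue of `M` is real, i.e. has zero imaginary part. -/
theorem spectrum_real_of_acyclic_transition_graph
    {σ : Type*} [Fintype σ] [Nonempty σ] [DecidableEq σ]
    (M : Matrix σ σ ℝ)
    (hMoff : ∀ i j : σ, i ≠ j → 0 ≤ M i j)
    (hMcol : ∀ j : σ, ∑ i, M i j = 0)
    (hacyclic : ∀ i : σ, ¬ Relation.TransGen (fun a b : σ => a ≠ b ∧ 0 < M b a) i i) :
    ∀ μ ∈ spectrum ℂ (M.map Complex.ofReal), μ.im = 0 := by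
  intro μ hμ
  set r : σ → σ → Prop := fun a b => a ≠ b ∧ 0 < M b a with hr
  -- partial order generated by the acyclic relation
  letI po : PartialOrder σ :=
    { le := fun a b => a = b ∨ Relation.TransGen r a b
      le_refl := fun a => Or.inl rfl
      le_trans := by
        rintro a b c (rfl | hab) (rfl | hbc)
        · exact Or.inl rfl
        · exact Or.inr hbc
        · exact Or.inr hab
        · exact Or.inr (hab.trans hbc)
      le_antisymm := by
        rintro a b (rfl | hab) (h | hba)
        · rfl
        · rfl
        · exact h.symm
        · exact absurd (hab.trans hba) (hacyclic a) }
  -- work on the linear extension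
  set τ := LinearExtension σ with hτ
  letI : Fintype τ := ‹Fintype σ›
  letI : DecidableEq τ := ‹DecidableEq σ›
  let e : σ ≃ τ := Equiv.refl σ
  have hmono : ∀ a b : σ, (a = b ∨ Relation.TransGen r a b) → e a ≤ e b := fun a b h =>
    (toLinearExtension (α := σ)).monotone' h
  set N : Matrix σ σ ℂ := M.map Complex.ofReal with hN
  set A : Matrix σ σ ℂ := Matrix.scalar σ μ - N with hA
  set A' : Matrix τ τ ℂ := A.submatrix e.symm e.symm with hA'
  have htri : A'.BlockTriangular OrderDual.toDual := by
    intro i j hij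
    have hij' : (i : τ) < j := hij
    have hne : e.symm i ≠ e.symm j := fun h => by
      exact absurd (e.symm.injective h ▸ hij') (lt_irrefl _)
    have hM0 : M (e.symm i) (e.symm j) = 0 := by
      by_contra h0
      have hpos : 0 < M (e.symm i) (e.symm j) :=
        lt_of_le_of_ne (hMoff _ _ hne) (Ne.symm h0)
      have hle : e (e.symm j) ≤ e (e.symm i) :=
        hmono _ _ (Or.inr (Relation.TransGen.single ⟨hne.symm, hpos⟩))
      rw [e.apply_symm_apply, e.apply_symm_apply] at hle
      exact absurd hle (not_le_of_gt hij')
    simp only [hA', Matrix.submatrix_apply, hA, hN, Matrix.sub_apply, Matrix.map_apply,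
      Matrix.scalar_apply, Matrix.diagonal_apply_ne _ hne, hM0]
    simp
  have hdet : A'.det = ∏ i, A' i i := Matrix.det_of_lowerTriangular A' htri
  have hdetAA' : A.det = A'.det := (Matrix.det_submatrix_equiv_self e.symm A).symm
  have hdet0 : A.det = 0 := by
    have hnu : ¬ IsUnit A := by
      rw [spectrum.mem_iff] at hμ
      convert hμ using 2
      rfl
    rwa [Matrix.isUnit_iff_isUnit_det, isUnit_iff_ne_zero, not_not] at hnu
  rw [hdetAA', hdet] at hdet0
  obtain ⟨i, -, hi⟩ := Finset.prod_eq_zero_iff.mp hdet0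
  have : A' i i = μ - Complex.ofReal (M (e.symm i) (e.symm i)) := by
    simp [hA', hA, hN, Matrix.scalar, Matrix.map_apply]
  rw [this, sub_eq_zero] at hi
  rw [hi]
  simp
end

section
/- Let σ be a finite nonempty type and let E : σ → σ → Prop be a directed-graph edge relation (with E j i meaning an edge from j to i, only allowed for j ≠ i) that contains a directed cycle on at least three distinct vertices, i.e. there are pairwise distinct states s₀, s₁, …, s_{m−1} with m ≥ 3 and E s_k s_{k+1 mod m} for all k. Then there exists a transition matrix M on σ whose transition graph is contained in E (i.e. for i ≠ j, M i j > 0 implies E j i) and whose complexification M.map Complex.ofReal has at least one eigenvalue with nonzero imaginary part. -/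
/-- Let `E` be a directed-graph edge relation on a finite nonempty type
(edges only between distinct states) containing a directed cycle on `m ≥ 3` pairwise
distinct vertices. Then there is a transition matrix `M` whose transition graph is
contained in `E` and whose complexification has an eigenvalue with nonzero imaginary
part. -/
theorem exists_transition_matrix_with_nonreal_eigenvalue_of_cycle
    {σ : Type*} [Fintype σ] [Nonempty σ] [DecidableEq σ]
    (E : σ → σ → Prop) (hE : ∀ j i : σ, E j i → j ≠ i)
    (m : ℕ) [NeZero m] (hm : 3 ≤ m)
    (s : Fin m → σ) (hs : Function.Injective s)
    (hcyc : ∀ k : Fin m, E (s k) (s (k + 1))) :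
    ∃ M : Matrix σ σ ℝ,
      (∀ i j : σ, i ≠ j → 0 ≤ M i j) ∧
      (∀ j : σ, ∑ i, M i j = 0) ∧
      (∀ i j : σ, i ≠ j → 0 < M i j → E j i) ∧
      ∃ μ ∈ spectrum ℂ (M.map Complex.ofReal), μ.im ≠ 0 := by
  obtain ⟨n, rfl⟩ : ∃ n, m = n + 1 := ⟨m - 1, by omega⟩
  -- The matrix: +1 entries along the cycle, -1 entries on the diagonal of cycle vertices.
  set M : Matrix σ σ ℝ := fun i j =>
    (∑ k : Fin (n + 1), if i = s (k + 1) ∧ j = s k then (1 : ℝ) else 0)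
      - (∑ k : Fin (n + 1), if i = s k ∧ j = s k then (1 : ℝ) else 0) with hM
  have hmpos : (0 : ℝ) < (n + 1) := by positivity
  -- the angle and roots of unity
  set θ : ℝ := 2 * Real.pi / (n + 1) with hθ
  have hθpos : 0 < θ := by
    apply div_pos (by positivity) hmpos
  have hθlt : θ < Real.pi := by
    rw [hθ, div_lt_iff₀ hmpos]
    have h3 : (3:ℝ) ≤ (n + 1) := by exact_mod_cast hm
    nlinarith [Real.pi_pos, mul_le_mul_of_nonneg_left h3 Real.pi_pos.le]
  set c : ℂ := Complex.exp (θ * Complex.I) with hc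
  have hc0 : c ≠ 0 := Complex.exp_ne_zero _
  have hcm : c ^ (n + 1) = 1 := by
    rw [hc, ← Complex.exp_nat_mul]
    have hmC : (((n + 1) : ℕ) : ℂ) ≠ 0 := Nat.cast_ne_zero.mpr (NeZero.ne (n + 1))
    have : ((n + 1 : ℕ) : ℂ) * (↑θ * Complex.I) = 2 * Real.pi * Complex.I := by
      rw [hθ]
      push_cast at hmC ⊢
      field_simp
    rw [this, Complex.exp_two_pi_mul_I]
  set d : ℂ := c⁻¹ with hd
  set μ : ℂ := c - 1 with hμ
  have hμim : μ.im ≠ 0 := by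
    have : μ.im = Real.sin θ := by
      rw [hμ, Complex.sub_im, hc, Complex.exp_ofReal_mul_I_im]
      simp
    rw [this]
    exact ne_of_gt (Real.sin_pos_of_pos_of_lt_pi hθpos hθlt)
  -- entries of M on the cycle
  have hMs : ∀ t l : Fin (n + 1), M (s t) (s l)
      = (if t = l + 1 then (1:ℝ) else 0) - (if t = l then (1:ℝ) else 0) := by
    intro t l
    simp only [hM]
    congr 1
    · rw [Finset.sum_eq_single l]
      · simp only [hs.eq_iff]
        simp
      · intro k _ hk
        simp only [hs.eq_iff]
        rw [if_neg]
        rintro ⟨-, h2⟩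
        exact hk h2.symm
      · simp
    · rw [Finset.sum_eq_single l]
      · simp only [hs.eq_iff]
        simp
      · intro k _ hk
        simp only [hs.eq_iff]
        rw [if_neg]
        rintro ⟨-, h2⟩
        exact hk h2.symm
      · simp
  have hMrow : ∀ x, x ∉ Set.range s → ∀ j, M x j = 0 := by
    intro x hx j
    simp only [hM]
    simp only [sub_eq_zero]
    rw [Finset.sum_eq_zero, Finset.sum_eq_zero]
    · intro k _
      rw [if_neg]; rintro ⟨h1, -⟩; exact hx ⟨k, h1.symm⟩
    · intro k _
      rw [if_neg]; rintro ⟨h1, -⟩; exact hx ⟨k + 1, h1.symm⟩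
  refine ⟨M, ?_, ?_, ?_, μ, ?_, hμim⟩
  · -- nonnegativity off the diagonal
    intro i j hij
    simp only [hM]
    have h2 : (∑ k : Fin (n + 1), if i = s k ∧ j = s k then (1 : ℝ) else 0) = 0 := by
      apply Finset.sum_eq_zero
      intro k _
      rw [if_neg]
      rintro ⟨h1, h2⟩
      exact hij (h1.trans h2.symm)
    rw [h2, sub_zero]
    positivity
  · -- column sums are zero
    intro j
    simp only [hM]
    rw [Finset.sum_sub_distrib, sub_eq_zero, Finset.sum_comm, Finset.sum_comm (γ := σ)]
    apply Finset.sum_congr rfl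
    intro k _
    by_cases hj : j = s k
    · simp [hj, Finset.sum_ite_eq']
    · simp [hj]
  · -- transition graph contained in E
    intro i j hij hpos
    simp only [hM] at hpos
    have h2 : (∑ k : Fin (n + 1), if i = s k ∧ j = s k then (1 : ℝ) else 0) = 0 := by
      apply Finset.sum_eq_zero
      intro k _
      rw [if_neg]
      rintro ⟨h1, h2⟩
      exact hij (h1.trans h2.symm)
    rw [h2, sub_zero] at hpos
    obtain ⟨k, -, hk⟩ := Finset.exists_ne_zero_of_sum_ne_zero (ne_of_gt hpos)
    by_cases h : i = s (k + 1) ∧ j = s k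
    · obtain ⟨h1, h2⟩ := h
      rw [h1, h2]
      exact hcyc k
    · simp [h] at hk
  · -- the nonreal eigenvalue
    rw [spectrum.mem_iff]
    set A : Matrix σ σ ℂ := M.map Complex.ofReal with hA
    have halg : (algebraMap ℂ (Matrix σ σ ℂ)) μ = μ • (1 : Matrix σ σ ℂ) := by
      rw [Algebra.algebraMap_eq_smul_one]
    -- the eigenvector
    set v : σ → ℂ := fun x => ∑ k : Fin (n + 1), if x = s k then d ^ (k : ℕ) else 0 with hv
    have hv0 : v ≠ 0 := by
      intro h
      have h0 : v (s 0) = 1 := by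
        simp only [hv]
        rw [Finset.sum_eq_single 0]
        · simp
        · intro k _ hk
          rw [if_neg]
          intro h'
          exact hk (hs h'.symm)
        · simp
      rw [h] at h0
      simp at h0
    have hkey : ∀ t : Fin (n + 1), c * d ^ (t : ℕ) = d ^ ((t - 1 : Fin (n + 1)) : ℕ) := by
      intro t
      have hsub : ((t - 1 : Fin (n + 1)) : ℕ) = if t = 0 then n else (t : ℕ) - 1 :=
        Fin.coe_sub_one t
      by_cases ht : t = 0
      · rw [hsub, if_pos ht, ht]
        simp only [Fin.val_zero, pow_zero, mul_one, hd, inv_pow]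
        exact (inv_eq_of_mul_eq_one_left (by rw [← pow_succ']; exact hcm)).symm
      · rw [hsub, if_neg ht]
        have htpos : 0 < (t : ℕ) := by
          exact Nat.pos_of_ne_zero fun h => ht (Fin.ext h)
        have : (t : ℕ) = ((t : ℕ) - 1) + 1 := by omega
        rw [this, pow_succ, hd]
        field_simp
        simp
    have hmv : A.mulVec v = μ • v := by
      funext x
      rw [Matrix.mulVec, dotProduct]
      simp only [hA, Matrix.map_apply]
      by_cases hx : x ∈ Set.range s
      · obtain ⟨t, rfl⟩ := hx
        have hvx : v (s t) = d ^ (t : ℕ) := by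
          simp only [hv]
          rw [Finset.sum_eq_single t]
          · simp
          · intro k _ hk
            rw [if_neg]
            intro h'
            exact hk (hs h'.symm)
          · simp
        have step1 : ∀ j : σ, (M (s t) j : ℂ) * v j
            = ∑ l : Fin (n + 1), if j = s l then (M (s t) (s l) : ℂ) * d ^ (l : ℕ) else 0 := by
          intro j
          simp only [hv]
          rw [Finset.mul_sum]
          apply Finset.sum_congr rfl
          intro l _
          by_cases h : j = s l
          · simp [h]
          · simp [h]
        calc (∑ j, (M (s t) j : ℂ) * v j)
            = ∑ j, ∑ l : Fin (n + 1), if j = s l then (M (s t) (s l) : ℂ) * d ^ (l : ℕ) else 0 := by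
              exact Finset.sum_congr rfl fun j _ => step1 j
          _ = ∑ l : Fin (n + 1), ∑ j, if j = s l then (M (s t) (s l) : ℂ) * d ^ (l : ℕ) else 0 :=
              Finset.sum_comm
          _ = ∑ l : Fin (n + 1), (M (s t) (s l) : ℂ) * d ^ (l : ℕ) := by
              apply Finset.sum_congr rfl
              intro l _
              rw [Finset.sum_ite_eq' Finset.univ (s l)]
              simp
          _ = (∑ l : Fin (n + 1), if t = l + 1 then d ^ (l : ℕ) else 0)
                - ∑ l : Fin (n + 1), if t = l then d ^ (l : ℕ) else 0 := by
              rw [← Finset.sum_sub_distrib]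
              apply Finset.sum_congr rfl
              intro l _
              rw [hMs t l]
              split_ifs <;> push_cast <;> ring
          _ = d ^ ((t - 1 : Fin (n + 1)) : ℕ) - d ^ (t : ℕ) := by
              congr 1
              · rw [Finset.sum_eq_single (t - 1)]
                · rw [if_pos (by rw [sub_add_cancel])]
                · intro l _ hl
                  rw [if_neg]
                  intro h
                  exact hl (by rw [h, add_sub_cancel_right])
                · simp
              · rw [Finset.sum_eq_single t]
                · simp
                · intro l _ hl
                  rw [if_neg fun h => hl h.symm]
                · simp
          _ = μ • v (s t) := by
              rw [hvx, hμ, ← hkey t]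
              simp only [smul_eq_mul]
              ring
      · have hvx : v x = 0 := by
          rw [hv]
          apply Finset.sum_eq_zero
          intro k _
          rw [if_neg fun h => hx ⟨k, h.symm⟩]
        have h2 : (μ • v) x = 0 := by simp [Pi.smul_apply, hvx]
        rw [h2]
        apply Finset.sum_eq_zero
        intro j _
        rw [hMrow x hx j]
        simp
    have hdet : (μ • (1 : Matrix σ σ ℂ) - A).det = 0 := by
      rw [← Matrix.exists_mulVec_eq_zero_iff]
      refine ⟨v, hv0, ?_⟩
      rw [Matrix.sub_mulVec, Matrix.smul_mulVec, Matrix.one_mulVec, hmv, sub_self]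
    rw [halg]
    rw [Matrix.isUnit_iff_isUnit_det, hdet]
    exact not_isUnit_zero
end
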